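/- arXiv:1901.03700 — 7 statements merged into one kernel-verified Lean document; each statement's English description precedes it below -/
import Mathlib

section
/- Inversion formula: for every n ≥ 0, x^n = ∑_{k=0}^{n} C(n,k) · (k!/(m+k)!) · B_{n-k}^{[m-1]}(x). -/
open scoped Nat Real

/-- The partial sum `∑_{l=0}^{m-1} z^l / l!` of the exponential series. -/
noncomputable def expPartialSum (m : ℕ) : PowerSeries ℝ :=
  ∑ l ∈ Finset.range m, PowerSeries.C ((1 : ℝ) / l !) * PowerSeries.X ^ l

/-- `B : ℕ → ℝ → ℝ` is the family of generalized Bernoulli polynomials of level `m`,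
i.e. `z^m e^{xz} / (e^z - ∑_{l=0}^{m-1} z^l/l!) = ∑ B n x * z^n / n!`, stated
multiplicatively. -/
noncomputable def IsGenBernoulli (m : ℕ) (B : ℕ → ℝ → ℝ) : Prop :=
  ∀ x : ℝ,
    (PowerSeries.exp ℝ - expPartialSum m) * PowerSeries.mk (fun n => B n x / n !) =
      PowerSeries.X ^ m * PowerSeries.mk (fun n => x ^ n / n !)

theorem stmt_5 (m : ℕ) (hm : 0 < m) (B : ℕ → ℝ → ℝ) (hB : IsGenBernoulli m B)
    (n : ℕ) (x : ℝ) :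
    x ^ n = ∑ k ∈ Finset.range (n + 1),
      (n.choose k : ℝ) * ((k ! : ℝ) / ((m + k)! : ℝ)) * B (n - k) x := by
  have h := congrArg (PowerSeries.coeff (n + m)) (hB x)
  rw [PowerSeries.coeff_X_pow_mul] at h
  rw [PowerSeries.coeff_mul, Finset.Nat.sum_antidiagonal_eq_sum_range_succ_mk] at h
  simp only [map_sub, PowerSeries.coeff_exp, PowerSeries.coeff_mk, expPartialSum,
    map_sum, map_mul, PowerSeries.coeff_C_mul, PowerSeries.coeff_X_pow,
    mul_ite, mul_one, mul_zero, Finset.sum_ite_eq, Finset.mem_range] at h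
  rw [show (n + m).succ = m + (n + 1) by omega, Finset.sum_range_add] at h
  have h1 : ∀ j ∈ Finset.range m,
      ((algebraMap ℚ ℝ) (1 / (j ! : ℚ)) - if j < m then (1 : ℝ) / j ! else 0) *
        (B (n + m - j) x / (n + m - j)!) = 0 := by
    intro j hj
    rw [Finset.mem_range] at hj
    simp [hj, eq_div_iff]
  rw [Finset.sum_eq_zero h1, zero_add] at h
  have h2 : ∀ k, ((algebraMap ℚ ℝ) (1 / ((m + k)! : ℚ)) -
      if m + k < m then (1 : ℝ) / (m + k)! else 0) *
      (B (n + m - (m + k)) x / (n + m - (m + k))!) =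
      (1 / ((m + k)! : ℝ)) * (B (n - k) x / (n - k)!) := by
    intro k
    have : n + m - (m + k) = n - k := by omega
    simp [this, eq_div_iff]
  simp only [h2] at h
  rw [eq_div_iff (by positivity : (n ! : ℝ) ≠ 0)] at h
  rw [← h, Finset.sum_mul]
  apply Finset.sum_congr rfl
  intro k hk
  rw [Finset.mem_range] at hk
  rw [Nat.cast_choose ℝ (by omega : k ≤ n)]
  have h1 : ((m + k)! : ℝ) ≠ 0 := by positivity
  have h2 : ((n - k)! : ℝ) ≠ 0 := by positivity
  have h3 : (k ! : ℝ) ≠ 0 := by positivity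
  field_simp
end

section
/- Recurrence relation: for every n ≥ 1, B_n^{[m-1]}(x) = (x - 1/(m+1)) B_{n-1}^{[m-1]}(x) - (1/(n(m-1)!)) ∑_{k=0}^{n-2} C(n,k) B_{n-k}^{[m-1]} B_k^{[m-1]}(x). -/
open scoped Nat Real

open PowerSeries

lemma coeff_G (m k : ℕ) :
    coeff k (exp ℝ - expPartialSum m) = if m ≤ k then (1 : ℝ) / k ! else 0 := by
  rw [map_sub, coeff_exp, expPartialSum]
  simp only [map_sum, coeff_C_mul, coeff_X_pow, mul_ite, mul_one, mul_zero]
  rw [Finset.sum_ite_eq (Finset.range m) k fun l => (1:ℝ)/l !]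
  have : algebraMap ℚ ℝ ((1 : ℚ) / k !) = (1 : ℝ) / k ! := by
    push_cast; simp
  rw [this]
  by_cases h : m ≤ k
  · simp [Finset.mem_range, h, not_lt.mpr h]
  · simp [Finset.mem_range, lt_of_not_ge h, h]

lemma G_ne (m : ℕ) : exp ℝ - expPartialSum m ≠ 0 := by
  intro h
  have := coeff_G m m
  rw [h, map_zero] at this
  simp at this
  exact Nat.factorial_ne_zero m (by exact_mod_cast this.symm)

lemma deriv_G (m : ℕ) (hm : 0 < m) :
    d⁄dX ℝ (exp ℝ - expPartialSum m) =
      (exp ℝ - expPartialSum m) + C ((1:ℝ) / (m-1)!) * X ^ (m-1) := by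
  ext k
  rw [coeff_derivative, coeff_G, map_add, coeff_G, coeff_C_mul, coeff_X_pow]
  rcases lt_trichotomy k (m-1) with h | h | h
  · rw [if_neg (by omega), if_neg (by omega), if_neg (by omega)]
    simp
  · rw [if_pos (by omega), if_neg (by omega), if_pos h, ← h]
    have : (k+1)! = (k+1) * k ! := Nat.factorial_succ k
    rw [this]
    push_cast
    have hk : ((k:ℝ)+1) ≠ 0 := by positivity
    have hf : ((k ! : ℕ) : ℝ) ≠ 0 := by positivity
    field_simp
    simp
  · rw [if_pos (by omega), if_pos (by omega), if_neg (by omega)]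
    have : (k+1)! = (k+1) * k ! := Nat.factorial_succ k
    rw [this]
    push_cast
    have hk : ((k:ℝ)+1) ≠ 0 := by positivity
    have hf : ((k ! : ℕ) : ℝ) ≠ 0 := by positivity
    field_simp
    simp

lemma deriv_E (x : ℝ) :
    d⁄dX ℝ (PowerSeries.mk fun n => x ^ n / n !) =
      C x * PowerSeries.mk fun n => x ^ n / n ! := by
  ext k
  rw [coeff_derivative, coeff_C_mul, coeff_mk, coeff_mk]
  rw [Nat.factorial_succ, pow_succ]
  have hk : ((k:ℝ)+1) ≠ 0 := by positivity
  have hf : ((k ! : ℕ) : ℝ) ≠ 0 := by positivity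
  push_cast
  field_simp

lemma deriv_F (Bx : ℕ → ℝ) :
    d⁄dX ℝ (PowerSeries.mk fun n => Bx n / n !) =
      PowerSeries.mk fun n => Bx (n+1) / n ! := by
  ext k
  rw [coeff_derivative, coeff_mk, coeff_mk, Nat.factorial_succ]
  have hk : ((k:ℝ)+1) ≠ 0 := by positivity
  have hf : ((k ! : ℕ) : ℝ) ≠ 0 := by positivity
  push_cast
  field_simp

lemma E_zero : (PowerSeries.mk fun n => (0:ℝ) ^ n / n !) = 1 := by
  ext k
  rw [coeff_mk, coeff_one]
  cases k <;> simp

lemma key (m : ℕ) (hm : 0 < m) (B : ℕ → ℝ → ℝ) (hB : IsGenBernoulli m B) (x : ℝ) :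
    X * PowerSeries.mk (fun n => B (n+1) x / n !) =
      C (m:ℝ) * PowerSeries.mk (fun n => B n x / n !)
      + (C x - 1) * (X * PowerSeries.mk (fun n => B n x / n !))
      - C ((1:ℝ)/(m-1)!) * PowerSeries.mk (fun n => B n 0 / n !)
          * PowerSeries.mk (fun n => B n x / n !) := by
  set G := exp ℝ - expPartialSum m with hGdef
  set F : ℝ⟦X⟧ := PowerSeries.mk (fun n => B n x / n !) with hF
  set F0 : ℝ⟦X⟧ := PowerSeries.mk (fun n => B n 0 / n !) with hF0
  set E : ℝ⟦X⟧ := PowerSeries.mk (fun n => x ^ n / n !) with hE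
  have hx : G * F = X ^ m * E := hB x
  have h0 : G * F0 = X ^ m := by
    have := hB 0
    rwa [E_zero, mul_one] at this
  have hd : G * PowerSeries.mk (fun n => B (n+1) x / n !)
      + F * (G + C ((1:ℝ)/(m-1)!) * X ^ (m-1))
      = X ^ m * (C x * E) + E * (C (m:ℝ) * X ^ (m-1)) := by
    have := congrArg (d⁄dX ℝ) hx
    rw [Derivation.leibniz, Derivation.leibniz, Derivation.leibniz_pow,
      derivative_X, deriv_G m hm, deriv_E, deriv_F] at this
    simpa [smul_eq_mul, nsmul_eq_mul, mul_comm, mul_assoc, mul_left_comm] using this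
  have hcancel := G_ne m
  apply mul_left_cancel₀ hcancel
  have hXm : (X : ℝ⟦X⟧) ^ m = X ^ (m-1) * X := by
    rw [← pow_succ]
    congr 1
    omega
  linear_combination X * hd - (C (m:ℝ) + (C x - 1) * X + X) * hx
    + (C ((1:ℝ)/(m-1)!) * F) * h0
    + (C ((1:ℝ)/(m-1)!) * F - C (m:ℝ) * E) * hXm

lemma B00 (m : ℕ) (hm : 0 < m) (B : ℕ → ℝ → ℝ) (hB : IsGenBernoulli m B) :
    B 0 0 = m ! := by
  have h0 : (exp ℝ - expPartialSum m) * PowerSeries.mk (fun n => B n 0 / n !) = X ^ m := by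
    have := hB 0; rwa [E_zero, mul_one] at this
  have hc := congrArg (coeff m) h0
  rw [coeff_mul, coeff_X_pow_self, Finset.Nat.sum_antidiagonal_eq_sum_range_succ_mk,
    Finset.sum_range_succ] at hc
  rw [Finset.sum_eq_zero (fun k hk => by
    rw [coeff_G, if_neg (by simp at hk; omega)]; ring)] at hc
  rw [coeff_G, if_pos le_rfl, coeff_mk] at hc
  simp at hc
  have hf : ((m ! : ℕ) : ℝ) ≠ 0 := by positivity
  field_simp at hc
  linarith

lemma B10 (m : ℕ) (hm : 0 < m) (B : ℕ → ℝ → ℝ) (hB : IsGenBernoulli m B) :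
    B 1 0 = -(m ! : ℝ) / (m + 1) := by
  have h0 : (exp ℝ - expPartialSum m) * PowerSeries.mk (fun n => B n 0 / n !) = X ^ m := by
    have := hB 0; rwa [E_zero, mul_one] at this
  have hc := congrArg (coeff (m+1)) h0
  rw [coeff_mul, coeff_X_pow, if_neg (by omega),
    Finset.Nat.sum_antidiagonal_eq_sum_range_succ_mk,
    Finset.sum_range_succ, Finset.sum_range_succ] at hc
  rw [Finset.sum_eq_zero (fun k hk => by
    rw [coeff_G, if_neg (by simp at hk; omega)]; ring)] at hc
  rw [coeff_G, if_pos le_rfl, coeff_G, if_pos (by omega), coeff_mk, coeff_mk] at hc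
  have e1 : m + 1 - m = 1 := by omega
  have e2 : m + 1 - (m+1) = 0 := by omega
  rw [e1, e2, B00 m hm B hB] at hc
  have hf : ((m ! : ℕ) : ℝ) ≠ 0 := by positivity
  have hf1 : (((m+1) ! : ℕ) : ℝ) ≠ 0 := by positivity
  have hfs : ((m+1)! : ℕ) = (m+1) * m ! := Nat.factorial_succ m
  rw [hfs] at hc
  push_cast at hc ⊢
  have hm1 : ((m:ℝ)+1) ≠ 0 := by positivity
  field_simp at hc ⊢
  have h2 : (B 1 0 * ((m:ℝ) + 1)) * (m ! : ℝ) = (-((m ! : ℕ) : ℝ)) * (m ! : ℝ) := by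
    linear_combination (m ! : ℝ) * hc
  exact mul_right_cancel₀ hf h2

theorem stmt_6 (m : ℕ) (hm : 0 < m) (B : ℕ → ℝ → ℝ) (hB : IsGenBernoulli m B)
    (n : ℕ) (hn : 1 ≤ n) (x : ℝ) :
    B n x = (x - 1 / (m + 1)) * B (n - 1) x -
      (1 / ((n : ℝ) * ((m - 1)! : ℝ))) *
        ∑ k ∈ Finset.range (n - 1), (n.choose k : ℝ) * B (n - k) 0 * B k x := by
  obtain ⟨p, rfl⟩ : ∃ p, n = p + 1 := ⟨n - 1, by omega⟩
  simp only [Nat.add_sub_cancel]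
  have hk := congrArg (coeff (p+1)) (key m hm B hB x)
  rw [sub_mul, one_mul, map_sub, map_add, mul_assoc (C ((1:ℝ)/(m-1)!)), map_sub,
    coeff_succ_X_mul, coeff_C_mul, coeff_C_mul, coeff_succ_X_mul, coeff_C_mul,
    coeff_mul, Finset.Nat.sum_antidiagonal_eq_sum_range_succ_mk] at hk
  simp only [coeff_mk] at hk
  rw [Finset.sum_range_succ', Finset.sum_range_succ'] at hk
  simp only [show ∀ i : ℕ, p + 1 - (i + 1 + 1) = p - 1 - i from fun i => by omega] at hk
  norm_num at hk
  rw [B00 m hm B hB, B10 m hm B hB] at hk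
  -- transform the target sum
  have hTS : (∑ k ∈ Finset.range p, ((p+1).choose k : ℝ) * B (p+1-k) 0 * B k x)
      = (((p+1)! : ℕ) : ℝ) *
        ∑ i ∈ Finset.range p, B (i+1+1) 0 / (i+1+1)! * (B (p-1-i) x / (p-1-i)!) := by
    rw [← Finset.sum_range_reflect, Finset.mul_sum]
    apply Finset.sum_congr rfl
    intro i hi
    simp only [Finset.mem_range] at hi
    have h1 : p - 1 - i ≤ p + 1 := by omega
    rw [Nat.cast_choose ℝ h1]
    have h3 : p + 1 - (p - 1 - i) = i + 1 + 1 := by omega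
    rw [h3]
    have f1 : (((p-1-i)! : ℕ) : ℝ) ≠ 0 := by positivity
    have f3 : (((i+1+1)! : ℕ) : ℝ) ≠ 0 := by positivity
    field_simp
  rw [hTS]
  have hp1 : (((p+1)! : ℕ) : ℝ) = ((p:ℝ)+1) * (p ! : ℕ) := by
    rw [Nat.factorial_succ]; push_cast; ring
  have hmf : ((m ! : ℕ) : ℝ) = (m:ℝ) * ((m-1)! : ℕ) := by
    rw [← Nat.mul_factorial_pred hm.ne']; push_cast; ring
  rw [hp1, hmf] at hk
  rw [hp1]
  set S : ℝ := ∑ i ∈ Finset.range p, B (i+1+1) 0 / (i+1+1)! * (B (p-1-i) x / (p-1-i)!) with hS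
  have f1 : ((p ! : ℕ) : ℝ) ≠ 0 := by positivity
  have f2 : (((m-1)! : ℕ) : ℝ) ≠ 0 := by positivity
  have f3 : ((m:ℝ)+1) ≠ 0 := by positivity
  have f4 : ((p:ℝ)+1) ≠ 0 := by positivity
  field_simp at hk
  have hT : B (p+1) x * ((m:ℝ)+1) * ((m-1)! : ℕ)
      = (x*((m:ℝ)+1) - 1) * B p x * ((m-1)! : ℕ) - (p ! : ℕ) * S * ((m:ℝ)+1) := by
    apply mul_left_cancel₀ f4
    linear_combination hk
  push_cast
  linear_combination (norm := skip) (1/(((m:ℝ)+1) * ((m-1)! : ℕ))) * hT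
  field_simp
  ring
end

section
/- Differential equation: for every n ≥ 1, y = B_n^{[m-1]}(x) satisfies (B_n^{[m-1]}/n!) y^{(n)} + (B_{n-1}^{[m-1]}/(n-1)!) y^{(n-1)} + ⋯ + (B_2^{[m-1]}/2!) y'' + (m-1)!(1/(m+1) - x) y' + n(m-1)! y = 0. -/
open scoped Nat Real

open PowerSeries Finset

lemma coeff_E (m n : ℕ) : coeff n (PowerSeries.exp ℝ - expPartialSum m) =
    if n < m then 0 else 1 / (n ! : ℝ) := by
  have he : (coeff n) (PowerSeries.exp ℝ) = 1 / (n ! : ℝ) := by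
    rw [coeff_exp]; push_cast; simp
  have hs : coeff n (expPartialSum m) = if n < m then 1 / (n ! : ℝ) else 0 := by
    rw [expPartialSum, map_sum]
    simp only [coeff_C_mul, coeff_X_pow]
    split_ifs with h
    · rw [Finset.sum_eq_single n]
      · simp
      · intro b _ hb; simp [Ne.symm hb]
      · intro hn; exact absurd (Finset.mem_range.mpr h) hn
    · apply Finset.sum_eq_zero
      intro l hl
      have : ¬ (n = l) := by simp [Finset.mem_range] at hl; omega
      simp [this]
  rw [map_sub, he, hs]
  split_ifs <;> ring

section
variable {m : ℕ} {B : ℕ → ℝ → ℝ}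

lemma hE0 (hB : IsGenBernoulli m B) :
    (PowerSeries.exp ℝ - expPartialSum m) * PowerSeries.mk (fun n => B n 0 / n !) =
      PowerSeries.X ^ m := by
  have h := hB 0
  have h1 : PowerSeries.mk (fun n => (0:ℝ) ^ n / n !) = 1 := by
    ext k
    rw [coeff_mk, PowerSeries.coeff_one]
    cases k <;> simp
  rw [h1, mul_one] at h
  exact h

lemma hEne (hm : 0 < m) : (PowerSeries.exp ℝ - expPartialSum m) ≠ 0 := by
  intro h
  have := coeff_E m m
  rw [h, map_zero] at this
  rw [if_neg (lt_irrefl m)] at this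
  have hf : (m ! : ℝ) ≠ 0 := Nat.cast_ne_zero.mpr (Nat.factorial_ne_zero m)
  field_simp at this
  simp at this

end

section
variable {m : ℕ} {B : ℕ → ℝ → ℝ}

lemma keyA1 (hm : 0 < m) (hB : IsGenBernoulli m B) (x : ℝ) :
    PowerSeries.mk (fun n => B n x / n !) =
      PowerSeries.mk (fun n => B n 0 / n !) * PowerSeries.mk (fun n => x ^ n / n !) := by
  apply mul_left_cancel₀ (hEne hm)
  rw [hB x, ← mul_assoc, hE0 hB]

lemma hBval (hm : 0 < m) (hB : IsGenBernoulli m B) (n : ℕ) (x : ℝ) :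
    B n x = ∑ j ∈ Finset.range (n+1),
      ((n ! : ℝ) / (j ! * (n-j)!)) * B (n-j) 0 * x ^ j := by
  have h := congrArg (coeff n) (keyA1 hm hB x)
  rw [coeff_mk, coeff_mul, Finset.Nat.sum_antidiagonal_eq_sum_range_succ_mk] at h
  simp only [coeff_mk] at h
  have hn : (n ! : ℝ) ≠ 0 := Nat.cast_ne_zero.mpr (Nat.factorial_ne_zero n)
  have h2 : B n x = n ! * ∑ i ∈ Finset.range (n+1), B i 0 / i ! * (x ^ (n - i) / (n-i)!) := by
    rw [← h]; field_simp
  rw [h2, Finset.mul_sum, ← Finset.sum_range_reflect]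
  apply Finset.sum_congr rfl
  intro j hj
  have hjn : j ≤ n := by simp [Finset.mem_range] at hj; omega
  have h4 : n + 1 - 1 - j = n - j := by omega
  have h3 : n - (n - j) = j := by omega
  rw [h4, h3]
  have hi : ((n-j)! : ℝ) ≠ 0 := Nat.cast_ne_zero.mpr (Nat.factorial_ne_zero _)
  have hj' : ((j)! : ℝ) ≠ 0 := Nat.cast_ne_zero.mpr (Nat.factorial_ne_zero _)
  field_simp
end

section
variable {m : ℕ} {B : ℕ → ℝ → ℝ}

lemma dE (hm : 0 < m) : d⁄dX ℝ (PowerSeries.exp ℝ - expPartialSum m) =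
    (PowerSeries.exp ℝ - expPartialSum m)
      + PowerSeries.C ((1:ℝ) / (m-1)!) * PowerSeries.X ^ (m-1) := by
  ext n
  rw [coeff_derivative, coeff_E, map_add, coeff_E, coeff_C_mul, coeff_X_pow]
  have hfac : ((n+1)! : ℝ) = (n+1) * n ! := by
    rw [Nat.factorial_succ]; push_cast; ring
  by_cases h1 : n + 1 < m
  · rw [if_pos h1, if_pos (by omega), if_neg (by omega)]
    ring
  · rw [if_neg h1]
    by_cases h2 : n < m
    · have : n = m - 1 := by omega
      rw [if_pos h2, if_pos this, hfac, this]
      have hne : (((m-1))! : ℝ) ≠ 0 := Nat.cast_ne_zero.mpr (Nat.factorial_ne_zero (m-1))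
      field_simp
      ring
    · rw [if_neg h2, if_neg (by omega), hfac]
      have h3 : ((n)! : ℝ) ≠ 0 := Nat.cast_ne_zero.mpr (Nat.factorial_ne_zero _)
      have h4 : ((n:ℝ)+1) ≠ 0 := by positivity
      field_simp
      ring
end

section
variable {m : ℕ} {B : ℕ → ℝ → ℝ}

lemma hqs (hm : 0 < m) (hB : IsGenBernoulli m B) :
    PowerSeries.X * (d⁄dX ℝ (PowerSeries.mk (fun n => B n 0 / n !)))
      + PowerSeries.X * (PowerSeries.mk (fun n => B n 0 / n !))
      + PowerSeries.C ((1:ℝ)/(m-1)!) * (PowerSeries.mk (fun n => B n 0 / n !))^2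
    = ((m : PowerSeries ℝ)) * (PowerSeries.mk (fun n => B n 0 / n !)) := by
  set E := PowerSeries.exp ℝ - expPartialSum m with hE
  set g := PowerSeries.mk (fun n => B n 0 / n !) with hg
  set dg := d⁄dX ℝ g with hdg
  have h0 : E * g = PowerSeries.X ^ m := hE0 hB
  have h1 : E * dg + g * (d⁄dX ℝ E) = (m : PowerSeries ℝ) * PowerSeries.X ^ (m-1) := by
    have := congrArg (d⁄dX ℝ) h0
    rw [Derivation.leibniz, Derivation.leibniz_pow, derivative_X, smul_eq_mul,
      smul_eq_mul, smul_eq_mul, mul_one, nsmul_eq_mul] at this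
    exact this
  have hdE' := dE hm
  have hXm : (PowerSeries.X : PowerSeries ℝ) ^ m = PowerSeries.X ^ (m-1) * PowerSeries.X := by
    rw [← pow_succ, Nat.sub_add_cancel hm]
  have key : PowerSeries.X ^ (m-1) * (PowerSeries.X * dg + PowerSeries.X * g
        + PowerSeries.C ((1:ℝ)/(m-1)!) * g^2)
      = PowerSeries.X ^ (m-1) * ((m : PowerSeries ℝ) * g) := by
    linear_combination g * h1 - g*g*hdE' - (dg + g) * h0 - (dg + g) * hXm
  exact mul_left_cancel₀ (pow_ne_zero _ PowerSeries.X_ne_zero) key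
end

section
variable {m : ℕ} {B : ℕ → ℝ → ℝ}

lemma quad (hm : 0 < m) (hB : IsGenBernoulli m B) (n : ℕ) :
    ∑ k ∈ Finset.range (n+2), (((n+1).choose k : ℝ)) * B k 0 * B (n+1-k) 0
      = ((m-1)! : ℝ) * (((m:ℝ) - (n+1)) * B (n+1) 0 - (n+1) * B n 0) := by
  have h := congrArg (coeff (n+1)) (hqs hm hB)
  rw [map_add, map_add, coeff_succ_X_mul, coeff_succ_X_mul, coeff_C_mul,
    coeff_derivative, coeff_mk, coeff_mk, sq, coeff_mul,
    Finset.Nat.sum_antidiagonal_eq_sum_range_succ_mk] at h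
  simp only [coeff_mk] at h
  have hC : coeff (n+1) ((m : PowerSeries ℝ) * PowerSeries.mk (fun k => B k 0 / k !))
      = (m:ℝ) * (B (n+1) 0 / (n+1)!) := by
    rw [show ((m : PowerSeries ℝ)) = PowerSeries.C (m:ℝ) from (map_natCast (PowerSeries.C) m).symm,
      coeff_C_mul, coeff_mk]
  rw [hC] at h
  -- h : B(n+1)/( n+1)! * (n+1) + B n/n! + 1/(m-1)! * ∑ ... = m * B(n+1)/(n+1)!
  have hm1 : (((m-1))! : ℝ) ≠ 0 := Nat.cast_ne_zero.mpr (Nat.factorial_ne_zero _)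
  have hn1 : (((n+1))! : ℝ) ≠ 0 := Nat.cast_ne_zero.mpr (Nat.factorial_ne_zero _)
  have hsum : ∑ k ∈ Finset.range (n+2), B k 0 / k ! * (B (n+1-k) 0 / (n+1-k)!)
      = (∑ k ∈ Finset.range (n+2), (((n+1).choose k : ℝ)) * B k 0 * B (n+1-k) 0) / (n+1)! := by
    rw [Finset.sum_div]
    apply Finset.sum_congr rfl
    intro k hk
    have hkn : k ≤ n+1 := by simp [Finset.mem_range] at hk; omega
    rw [Nat.cast_choose ℝ hkn]
    have h2 : ((k)! : ℝ) ≠ 0 := Nat.cast_ne_zero.mpr (Nat.factorial_ne_zero _)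
    have h3 : (((n+1-k))! : ℝ) ≠ 0 := Nat.cast_ne_zero.mpr (Nat.factorial_ne_zero _)
    field_simp
  rw [hsum] at h
  have hfac : ((n+1)! : ℝ) = (n+1) * n ! := by rw [Nat.factorial_succ]; push_cast; ring
  have hn0 : ((n)! : ℝ) ≠ 0 := Nat.cast_ne_zero.mpr (Nat.factorial_ne_zero _)
  field_simp at h
  have h3 : (∑ k ∈ Finset.range (n+2), (((n+1).choose k : ℝ)) * B k 0 * B (n+1-k) 0)
        * (((n+1)!:ℝ)^2 * (n ! : ℝ))
      = (((m-1)! : ℝ) * (((m:ℝ) - (n+1)) * B (n+1) 0 - (n+1) * B n 0))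
        * (((n+1)!:ℝ)^2 * (n ! : ℝ)) := by
    linear_combination ((n+1)! : ℝ)^2 * h - ((n+1)! : ℝ)^2 * ((m-1)! : ℝ) * B n 0 * hfac
  have hne : (((n+1)!:ℝ)^2 * (n ! : ℝ)) ≠ 0 := by positivity
  exact mul_right_cancel₀ hne h3
end

section
variable {m : ℕ} {B : ℕ → ℝ → ℝ}

lemma hb0 (hm : 0 < m) (hB : IsGenBernoulli m B) : B 0 0 = (m ! : ℝ) := by
  have h := congrArg (coeff m) (hE0 hB)
  rw [coeff_mul, Finset.Nat.sum_antidiagonal_eq_sum_range_succ_mk, coeff_X_pow,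
    if_pos rfl] at h
  rw [Finset.sum_eq_single m] at h
  · rw [coeff_E, if_neg (lt_irrefl m), coeff_mk] at h
    simp at h
    have hmf : ((m)! : ℝ) ≠ 0 := Nat.cast_ne_zero.mpr (Nat.factorial_ne_zero _)
    field_simp at h
    linarith [h]
  · intro i hi hne
    have : i < m := by simp [Finset.mem_range] at hi; omega
    rw [coeff_E, if_pos this, zero_mul]
  · intro hmem; exact absurd (Finset.mem_range.mpr (Nat.lt_succ_self m)) hmem

lemma hb1 (hm : 0 < m) (hB : IsGenBernoulli m B) : B 1 0 = -(m ! : ℝ) / (m+1) := by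
  have h := congrArg (coeff (m+1)) (hE0 hB)
  rw [coeff_mul, Finset.Nat.sum_antidiagonal_eq_sum_range_succ_mk, coeff_X_pow,
    if_neg (by omega)] at h
  rw [Finset.sum_range_succ, Finset.sum_range_succ] at h
  have hz : ∑ i ∈ Finset.range m, coeff i (PowerSeries.exp ℝ - expPartialSum m) *
      coeff (m+1-i) (PowerSeries.mk (fun n => B n 0 / n !)) = 0 := by
    apply Finset.sum_eq_zero
    intro i hi
    rw [coeff_E, if_pos (Finset.mem_range.mp hi), zero_mul]
  simp only at h
  have h1 : m + 1 - m = 1 := by omega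
  have h2 : m + 1 - (m+1) = 0 := by omega
  rw [hz, zero_add, coeff_E, coeff_E, if_neg (by omega), if_neg (by omega), coeff_mk,
    coeff_mk, h1, h2, hb0 hm hB] at h
  have hmf : ((m)! : ℝ) ≠ 0 := Nat.cast_ne_zero.mpr (Nat.factorial_ne_zero _)
  have hmf1 : (((m+1))! : ℝ) ≠ 0 := Nat.cast_ne_zero.mpr (Nat.factorial_ne_zero _)
  have hfac : ((m+1)! : ℝ) = (m+1) * m ! := by rw [Nat.factorial_succ]; push_cast; ring
  have hm1 : ((m:ℝ)+1) ≠ 0 := by positivity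
  field_simp at h
  have h4 : B 1 0 * ((m:ℝ)+1) * (m ! : ℝ) = -(m ! : ℝ) * (m ! : ℝ) := by
    linear_combination h - B 1 0 * hfac
  have h5 := mul_right_cancel₀ hmf h4
  rw [eq_div_iff hm1]
  linear_combination h5
end

section
variable {m : ℕ} {B : ℕ → ℝ → ℝ}

lemma hB0const (hm : 0 < m) (hB : IsGenBernoulli m B) (x : ℝ) : B 0 x = B 0 0 := by
  rw [hBval hm hB 0 x, hBval hm hB 0 0]
  simp

lemma hHD (hm : 0 < m) (hB : IsGenBernoulli m B) (j : ℕ) (x : ℝ) :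
    HasDerivAt (B j) ((j:ℝ) * B (j-1) x) x := by
  cases j with
  | zero =>
    have heq : B 0 = fun _ : ℝ => B 0 0 := funext (fun y => hB0const hm hB y)
    rw [heq]
    simpa using hasDerivAt_const x (B 0 0)
  | succ i =>
    have heq : B (i+1) = fun y : ℝ => ∑ j ∈ Finset.range (i+2),
        (((i+1)! : ℝ) / (j ! * (i+1-j)!)) * B (i+1-j) 0 * y ^ j :=
      funext (fun y => hBval hm hB (i+1) y)
    rw [heq]
    have hd : HasDerivAt (fun y : ℝ => ∑ j ∈ Finset.range (i+2),
        (((i+1)! : ℝ) / (j ! * (i+1-j)!)) * B (i+1-j) 0 * y ^ j)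
        (∑ j ∈ Finset.range (i+2),
          (((i+1)! : ℝ) / (j ! * (i+1-j)!)) * B (i+1-j) 0 * (j * x ^ (j-1))) x := by
      apply HasDerivAt.fun_sum
      intro j _
      simpa [mul_assoc] using (hasDerivAt_pow j x).const_mul
        ((((i+1)! : ℝ) / (j ! * (i+1-j)!)) * B (i+1-j) 0)
    convert hd using 1
    rw [Finset.sum_range_succ']
    have e0 : i + 1 - 1 = i := by omega
    rw [e0, hBval hm hB i x, Finset.mul_sum]
    simp only [Nat.cast_zero, mul_zero, zero_mul, add_zero]
    apply Finset.sum_congr rfl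
    intro k hk
    have hk' : k ≤ i := by simp [Finset.mem_range] at hk; omega
    have e1 : i + 1 - (k+1) = i - k := by omega
    have e2 : (k + 1) - 1 = k := by omega
    rw [e1, e2]
    have f1 : (((i+1))! : ℝ) = (i+1) * i ! := by rw [Nat.factorial_succ]; push_cast; ring
    have f2 : (((k+1))! : ℝ) = (k+1) * k ! := by rw [Nat.factorial_succ]; push_cast; ring
    have n1 : ((k)! : ℝ) ≠ 0 := Nat.cast_ne_zero.mpr (Nat.factorial_ne_zero _)
    have n2 : (((i-k))! : ℝ) ≠ 0 := Nat.cast_ne_zero.mpr (Nat.factorial_ne_zero _)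
    have n3 : ((k:ℝ)+1) ≠ 0 := by positivity
    rw [f1, f2]
    push_cast
    field_simp

lemma hderiv (hm : 0 < m) (hB : IsGenBernoulli m B) (j : ℕ) :
    deriv (B j) = fun x => (j:ℝ) * B (j-1) x :=
  funext (fun x => (hHD hm hB j x).deriv)

lemma hiter (hm : 0 < m) (hB : IsGenBernoulli m B) :
    ∀ (k n : ℕ), k ≤ n → iteratedDeriv k (B n) =
      fun x => (n.descFactorial k : ℝ) * B (n-k) x := by
  intro k
  induction k with
  | zero => intro n _; funext x; simp [iteratedDeriv_zero]
  | succ k ih =>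
    intro n hkn
    have hk : k ≤ n := by omega
    rw [iteratedDeriv_succ, ih n hk]
    funext x
    rw [deriv_const_mul _ (hHD hm hB (n-k) x).differentiableAt,
      (hHD hm hB (n-k) x).deriv]
    have e1 : n - k - 1 = n - (k+1) := by omega
    have e2 : (n.descFactorial (k+1) : ℝ) = (n - k : ℕ) * (n.descFactorial k : ℝ) := by
      rw [Nat.descFactorial_succ]; push_cast; ring
    rw [e1, e2]
    ring
end

noncomputable def Fexp (m : ℕ) (B : ℕ → ℝ → ℝ) (n : ℕ) (x : ℝ) : ℝ :=
  (∑ k ∈ Finset.Icc 2 n, (B k 0 / (k ! : ℝ)) * ((n.descFactorial k : ℝ) * B (n-k) x)) +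
  ((m-1)! : ℝ) * (1/(m+1) - x) * ((n:ℝ) * B (n-1) x) +
  (n:ℝ) * ((m-1)! : ℝ) * B n x

section
variable {m : ℕ} {B : ℕ → ℝ → ℝ}

lemma F0 (hm : 0 < m) (hB : IsGenBernoulli m B) (n : ℕ) (hn : 1 ≤ n) :
    Fexp m B n 0 = 0 := by
  obtain ⟨s, rfl⟩ : ∃ s, n = s + 1 := ⟨n - 1, by omega⟩
  unfold Fexp
  have hS : ∑ k ∈ Finset.Icc 2 (s+1), (B k 0 / (k ! : ℝ)) *
        (((s+1).descFactorial k : ℝ) * B (s+1-k) 0)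
      = ∑ k ∈ Finset.Icc 2 (s+1), (((s+1).choose k : ℝ)) * B k 0 * B (s+1-k) 0 := by
    apply Finset.sum_congr rfl
    intro k _
    rw [Nat.descFactorial_eq_factorial_mul_choose]
    have n1 : ((k)! : ℝ) ≠ 0 := Nat.cast_ne_zero.mpr (Nat.factorial_ne_zero _)
    push_cast
    field_simp
  have hq := quad hm hB s
  have hins : Finset.range (s+2) = insert 0 (insert 1 (Finset.Icc 2 (s+1))) := by
    ext a; simp; omega
  rw [hins, Finset.sum_insert (by simp), Finset.sum_insert (by simp)] at hq
  simp only [Nat.choose_zero_right, Nat.choose_one_right, Nat.cast_one, one_mul,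
    Nat.sub_zero, Nat.add_sub_cancel] at hq
  rw [hb0 hm hB, hb1 hm hB] at hq
  rw [hS]
  have hmA : ((m:ℝ)) * (((m-1))! : ℝ) = (m ! : ℝ) := by
    exact_mod_cast congrArg (Nat.cast : ℕ → ℝ) (Nat.mul_factorial_pred hm.ne')
  have hm1 : ((m:ℝ)+1) ≠ 0 := by positivity
  field_simp at hq ⊢
  simp only [Nat.add_sub_cancel, Nat.cast_add, Nat.cast_one] at hq ⊢
  linear_combination hq + (((m:ℝ)+1) * B (s+1) 0 - ((s:ℝ)+1) * B s 0) * hmA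

lemma FHD (hm : 0 < m) (hB : IsGenBernoulli m B) (n : ℕ) (hn : 1 ≤ n) (x : ℝ) :
    HasDerivAt (fun y => Fexp m B (n+1) y) (((n:ℝ)+1) * Fexp m B n x) x := by
  have h1 : HasDerivAt (fun y => ∑ k ∈ Finset.Icc 2 (n+1),
        (B k 0 / (k ! : ℝ)) * (((n+1).descFactorial k : ℝ) * B (n+1-k) y))
      (∑ k ∈ Finset.Icc 2 (n+1),
        (B k 0 / (k ! : ℝ)) * (((n+1).descFactorial k : ℝ) *
          (((n+1-k : ℕ):ℝ) * B (n+1-k-1) x))) x := by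
    apply HasDerivAt.fun_sum
    intro k _
    exact ((hHD hm hB (n+1-k) x).const_mul (((n+1).descFactorial k : ℝ))).const_mul
      (B k 0 / (k ! : ℝ))
  have h2 : HasDerivAt (fun y : ℝ => ((m-1)! : ℝ) * (1/(m+1) - y) * (((n:ℝ)+1) * B n y))
      ((-((m-1)! : ℝ)) * (((n:ℝ)+1) * B n x) +
        ((m-1)! : ℝ) * (1/(m+1) - x) * (((n:ℝ)+1) * ((n:ℝ) * B (n-1) x))) x := by
    have ha : HasDerivAt (fun y : ℝ => ((m-1)! : ℝ) * (1/(m+1) - y)) (-((m-1)! : ℝ)) x := by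
      simpa using ((hasDerivAt_id x).const_sub ((1:ℝ)/(m+1))).const_mul (((m-1)! : ℝ))
    have hb' : HasDerivAt (fun y : ℝ => ((n:ℝ)+1) * B n y) (((n:ℝ)+1) * ((n:ℝ) * B (n-1) x)) x := by
      simpa using (hHD hm hB n x).const_mul ((n:ℝ)+1)
    simpa using ha.fun_mul hb'
  have h3 : HasDerivAt (fun y : ℝ => ((n:ℝ)+1) * ((m-1)! : ℝ) * B (n+1) y)
      (((n:ℝ)+1) * ((m-1)! : ℝ) * (((n:ℝ)+1) * B n x)) x := by
    simpa [mul_assoc] using (hHD hm hB (n+1) x).const_mul (((n:ℝ)+1) * ((m-1)! : ℝ))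
  have htot := (h1.add h2).add h3
  have hFeq : (fun y => Fexp m B (n+1) y) = (fun y =>
      (∑ k ∈ Finset.Icc 2 (n+1),
        (B k 0 / (k ! : ℝ)) * (((n+1).descFactorial k : ℝ) * B (n+1-k) y)) +
      ((m-1)! : ℝ) * (1/(m+1) - y) * (((n:ℝ)+1) * B n y) +
      ((n:ℝ)+1) * ((m-1)! : ℝ) * B (n+1) y) := by
    funext y
    unfold Fexp
    push_cast
    simp only [Nat.add_sub_cancel]
  rw [hFeq]
  refine htot.congr_deriv ?_
  symm
  -- identity between the two derivative values
  unfold Fexp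
  have hic : Finset.Icc 2 (n+1) = insert (n+1) (Finset.Icc 2 n) := by
    ext a; simp; omega
  rw [hic, Finset.sum_insert (by simp)]
  have hz : (B (n+1) 0 / ((n+1)! : ℝ)) * (((n+1).descFactorial (n+1) : ℝ) *
      (((n+1-(n+1) : ℕ):ℝ) * B (n+1-(n+1)-1) x)) = 0 := by
    simp
  rw [hz, zero_add]
  have hsum : ((n:ℝ)+1) * ∑ k ∈ Finset.Icc 2 n,
        (B k 0 / (k ! : ℝ)) * ((n.descFactorial k : ℝ) * B (n-k) x)
      = ∑ k ∈ Finset.Icc 2 n, (B k 0 / (k ! : ℝ)) * (((n+1).descFactorial k : ℝ) *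
          (((n+1-k : ℕ):ℝ) * B (n+1-k-1) x)) := by
    rw [Finset.mul_sum]
    apply Finset.sum_congr rfl
    intro k hk
    have hk2 : 2 ≤ k ∧ k ≤ n := by simpa using hk
    have e1 : n + 1 - k - 1 = n - k := by omega
    have e2 : ((n+1).descFactorial k : ℝ) * ((n+1-k : ℕ) : ℝ)
        = ((n:ℝ)+1) * (n.descFactorial k : ℝ) := by
      have h5 : (n+1-k) * (n+1).descFactorial k = (n+1) * n.descFactorial k := by
        obtain ⟨k', rfl⟩ : ∃ k', k = k' + 1 := ⟨k - 1, by omega⟩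
        rw [← Nat.descFactorial_succ, Nat.succ_descFactorial_succ]
      calc ((n+1).descFactorial k : ℝ) * ((n+1-k : ℕ) : ℝ)
          = (((n+1-k) * (n+1).descFactorial k : ℕ) : ℝ) := by push_cast; ring
        _ = (((n+1) * n.descFactorial k : ℕ) : ℝ) := by rw [h5]
        _ = ((n:ℝ)+1) * (n.descFactorial k : ℝ) := by push_cast; ring
    rw [e1]
    linear_combination (-(B k 0 / (k ! : ℝ) * B (n-k) x)) * e2
  linear_combination hsum
end

section
variable {m : ℕ} {B : ℕ → ℝ → ℝ}

lemma mainF (hm : 0 < m) (hB : IsGenBernoulli m B) :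
    ∀ n, 1 ≤ n → ∀ x : ℝ, Fexp m B n x = 0 := by
  intro n
  refine Nat.le_induction ?_ ?_ n
  · intro x
    unfold Fexp
    rw [Finset.Icc_eq_empty (by omega), Finset.sum_empty]
    have hB1 : B 1 x = B 1 0 + (m ! : ℝ) * x := by
      rw [hBval hm hB 1 x]
      rw [Finset.sum_range_succ, Finset.sum_range_succ, Finset.sum_range_zero]
      have : B (1-1) 0 = (m ! : ℝ) := by norm_num [hb0 hm hB]
      rw [this]
      norm_num [Nat.factorial]
    have hB0 : B (1-1) x = (m ! : ℝ) := by
      norm_num [hB0const hm hB x, hb0 hm hB]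
    rw [hB1, hB0, hb1 hm hB]
    push_cast
    ring
  · intro n hn ih x
    have hd : ∀ y, deriv (fun z => Fexp m B (n+1) z) y = 0 := fun y => by
      rw [(FHD hm hB n hn y).deriv, ih y, mul_zero]
    have hdiff : Differentiable ℝ (fun z => Fexp m B (n+1) z) := fun y =>
      (FHD hm hB n hn y).differentiableAt
    calc Fexp m B (n+1) x = Fexp m B (n+1) 0 := is_const_of_deriv_eq_zero hdiff hd x 0
      _ = 0 := F0 hm hB (n+1) (by omega)
end

theorem stmt_10 (m : ℕ) (hm : 0 < m) (B : ℕ → ℝ → ℝ) (hB : IsGenBernoulli m B)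
    (n : ℕ) (hn : 1 ≤ n) (x : ℝ) :
    (∑ k ∈ Finset.Icc 2 n, (B k 0 / (k ! : ℝ)) * iteratedDeriv k (B n) x) +
      ((m - 1)! : ℝ) * (1 / (m + 1) - x) * deriv (B n) x +
      (n : ℝ) * ((m - 1)! : ℝ) * B n x = 0 := by
  have h1 : (∑ k ∈ Finset.Icc 2 n, (B k 0 / (k ! : ℝ)) * iteratedDeriv k (B n) x)
      = ∑ k ∈ Finset.Icc 2 n, (B k 0 / (k ! : ℝ)) * ((n.descFactorial k : ℝ) * B (n-k) x) := by
    apply Finset.sum_congr rfl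
    intro k hk
    rw [hiter hm hB k n (Finset.mem_Icc.mp hk).2]
  have h2 : deriv (B n) x = (n:ℝ) * B (n-1) x := by rw [hderiv hm hB n]
  rw [h1, h2]
  have h3 := mainF hm hB n hn x
  unfold Fexp at h3
  linear_combination h3
end

section
/- For every m ∈ ℕ, ζ(2) = (2π²/m!)[B_2^{[m-1]}/2 + (m!/4)·((m-1)/(m+1)) - (m!/6)·((m-1)/((m+1)²))·((m²+2m-2)/(m+2))], where B_2^{[m-1]} = B_2^{[m-1]}(0). In particular, for m = 1 this reduces to ζ(2) = π² B_2 · 2 · 1/2! = π²/6. -/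
open scoped Nat Real

lemma coeffA (m i : ℕ) :
    PowerSeries.coeff i (PowerSeries.exp ℝ - expPartialSum m)
      = if i < m then 0 else (1:ℝ)/i ! := by
  have hP : PowerSeries.coeff i (expPartialSum m) = if i < m then (1:ℝ)/i ! else 0 := by
    unfold expPartialSum
    rw [map_sum]
    simp [PowerSeries.coeff_X_pow, mul_ite, Finset.sum_ite_eq', Finset.mem_range]
  rw [map_sub, PowerSeries.coeff_exp, hP]
  split <;> simp

lemma keycoeff (m k : ℕ) (B : ℕ → ℝ → ℝ) (hB : IsGenBernoulli m B) (hk : k ≤ 2) :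
    ∑ j ∈ Finset.range (k+1), (1:ℝ)/(m+j)! * (B (k-j) 0 / (k-j)!) = (0:ℝ)^k / k ! := by
  have h := congrArg (PowerSeries.coeff (m + k)) (hB 0)
  rw [show m + k = k + m by ring, PowerSeries.coeff_X_pow_mul, PowerSeries.coeff_mul] at h
  simp only [PowerSeries.coeff_mk] at h
  rw [Finset.Nat.sum_antidiagonal_eq_sum_range_succ
    (f := fun i j => PowerSeries.coeff i (PowerSeries.exp ℝ - expPartialSum m) * (B j 0 / j !))] at h
  rw [Nat.succ_eq_add_one, show k + m + 1 = m + (k+1) by ring] at h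
  rw [Finset.sum_range_add] at h
  rw [Finset.sum_eq_zero (fun i hi => by
    rw [coeffA, if_pos (Finset.mem_range.mp hi), zero_mul])] at h
  rw [zero_add] at h
  rw [← h]
  apply Finset.sum_congr rfl
  intro j hj
  have hj2 := Finset.mem_range.mp hj
  rw [coeffA, if_neg (by omega), show k + m - (m + j) = k - j by omega]

theorem stmt_12 (m : ℕ) (hm : 0 < m) (B : ℕ → ℝ → ℝ) (hB : IsGenBernoulli m B) :
    riemannZeta 2 =
      (((2 * π ^ 2 / (m ! : ℝ)) *
        (B 2 0 / 2 + ((m ! : ℝ) / 4) * ((m - 1) / (m + 1)) -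
          ((m ! : ℝ) / 6) * ((m - 1) / ((m + 1 : ℝ) ^ 2)) *
            (((m : ℝ) ^ 2 + 2 * m - 2) / (m + 2))) : ℝ) : ℂ) ∧
    riemannZeta 2 = ((π ^ 2 / 6 : ℝ) : ℂ) := by
  have h0 := keycoeff m 0 B hB (by norm_num)
  have h1 := keycoeff m 1 B hB (by norm_num)
  have h2 := keycoeff m 2 B hB (by norm_num)
  simp [Finset.sum_range_succ] at h0 h1 h2
  have hf : (0:ℝ) < m ! := by positivity
  have hf1 : ((m+1)! : ℝ) = ((m:ℝ)+1) * m ! := by push_cast [Nat.factorial_succ]; ring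
  have hf2 : ((m+2)! : ℝ) = ((m:ℝ)+2) * (((m:ℝ)+1) * m !) := by
    push_cast [Nat.factorial_succ]; ring
  have hm1 : ((m:ℝ)+1) ≠ 0 := by positivity
  have hm2 : ((m:ℝ)+2) ≠ 0 := by positivity
  have hB0 : B 0 0 = m ! := by
    field_simp at h0; linarith
  have hB1 : B 1 0 = -(m ! : ℝ) / ((m:ℝ)+1) := by
    rw [hf1, hB0] at h1
    field_simp at h1 ⊢
    nlinarith [h1]
  have hB2 : B 2 0 = 2 * (m ! : ℝ) / (((m:ℝ)+1)^2 * ((m:ℝ)+2)) := by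
    rw [hf1, hf2, hB0, hB1] at h2
    field_simp at h2
    have h2' : (B 2 0 * (((m:ℝ)+1)^2*((m:ℝ)+2)) - 2*(m ! :ℝ)) * ((m ! :ℝ)^2*((m:ℝ)+1)) = 0 := by
      linear_combination ((m ! :ℝ)^2*((m:ℝ)+1)) * h2
    rcases mul_eq_zero.mp h2' with h | h
    · rw [eq_div_iff (by positivity)]; linarith
    · exact absurd h (by positivity)
  have key : (2 * π ^ 2 / (m ! : ℝ)) *
        (B 2 0 / 2 + ((m ! : ℝ) / 4) * ((m - 1) / (m + 1)) -
          ((m ! : ℝ) / 6) * ((m - 1) / ((m + 1 : ℝ) ^ 2)) *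
            (((m : ℝ) ^ 2 + 2 * m - 2) / (m + 2))) = π ^ 2 / 6 := by
    rw [hB2]
    field_simp
    ring
  rw [key]
  refine ⟨?_, ?_⟩ <;> (rw [riemannZeta_two]; push_cast; ring)
end

section
/- For fixed m ∈ ℕ and every r ∈ ℕ, ζ(2r) = (-1)^{r-1} 2^{2r-1} π^{2r} B_{2r}^{[m-1]} / (m!(2r)!) + Δ_r^{[m-1]}, where Δ_r^{[m-1]} = ((-1)^{r-1} 2^{2r-1} π^{2r}/m!)[ (B_{2r}^{[m-1]}(1) - B_{2r}^{[m-1]})/(2(2r)!) - (B_{2r+1}^{[m-1]}(1) - B_{2r+1}^{[m-1]})/((2r+1)!) - ∑_{j=1}^{r-1} ((B_{2r-2j+1}^{[m-1]}(1) - B_{2r-2j+1}^{[m-1]})/((2r-2j+1)!)) · B_{2j}/(2j)! ], with B_{2j} the classical Bernoulli numbers. -/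
open scoped Nat Real

namespace Stmt13Aux

open PowerSeries Finset

lemma coeff_expPartialSum (m k : ℕ) :
    PowerSeries.coeff k (expPartialSum m) = if k < m then 1 / (k ! : ℝ) else 0 := by
  rw [expPartialSum, map_sum]
  simp only [PowerSeries.coeff_C_mul_X_pow]
  rw [Finset.sum_ite_eq (Finset.range m) k]
  simp [Finset.mem_range]

lemma algebraMap_rat_real (q : ℚ) : algebraMap ℚ ℝ q = (q : ℝ) := by
  simp [eq_ratCast]

lemma sum_range_two_mul (n : ℕ) (f : ℕ → ℝ) :
    ∑ k ∈ Finset.range (2 * n), f k = ∑ j ∈ Finset.range n, (f (2*j) + f (2*j+1)) := by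
  induction n with
  | zero => simp
  | succ n ih =>
    rw [Nat.mul_succ, sum_range_succ, sum_range_succ, sum_range_succ, ih]
    rw [add_assoc]

lemma sum_eval (r : ℕ) (hr : 1 ≤ r) (dd βr : ℕ → ℝ)
    (hodd : ∀ n, Odd n → 1 < n → βr n = 0)
    (hβ0 : βr 0 = 1) (hβ1 : βr 1 = -(1/2)) :
    ∑ k ∈ Finset.range (2*(r+1)), dd k * βr (2*r+1-k)
      = dd (2*r+1) - dd (2*r)/2 + (∑ j ∈ Finset.Icc 1 (r-1), dd (2*r-2*j+1) * βr (2*j))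
        + dd 1 * βr (2*r) := by
  rw [sum_range_two_mul, Finset.sum_add_distrib]
  have hA : ∑ j ∈ Finset.range (r+1), dd (2*j) * βr (2*r+1-2*j) = - dd (2*r)/2 := by
    rw [Finset.sum_range_succ, Finset.sum_eq_zero, zero_add]
    · have : 2*r+1-2*r = 1 := by omega
      rw [this, hβ1]; ring
    · intro j hj
      rw [Finset.mem_range] at hj
      rw [hodd (2*r+1-2*j) ⟨r - j, by omega⟩ (by omega), mul_zero]
  have hC : ∑ j ∈ Finset.range (r+1), dd (2*j+1) * βr (2*r+1-(2*j+1))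
      = dd (2*r+1) + (∑ j ∈ Finset.Icc 1 (r-1), dd (2*r-2*j+1) * βr (2*j))
        + dd 1 * βr (2*r) := by
    rw [← Finset.sum_range_reflect]
    have hcongr : ∀ j ∈ Finset.range (r+1),
        dd (2*(r+1-1-j)+1) * βr (2*r+1-(2*(r+1-1-j)+1)) = dd (2*r-2*j+1) * βr (2*j) := by
      intro j hj
      rw [Finset.mem_range] at hj
      have e1 : 2*(r+1-1-j)+1 = 2*r-2*j+1 := by omega
      have e2 : 2*r+1-(2*(r+1-1-j)+1) = 2*j := by omega
      rw [e2, e1]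
    rw [Finset.sum_congr rfl hcongr, Finset.sum_range_succ']
    have e0 : 2*r-2*0+1 = 2*r+1 := by omega
    rw [e0, Nat.mul_zero, hβ0, mul_one]
    have hsplit : ∑ j ∈ Finset.Icc 1 r, dd (2*r-2*j+1) * βr (2*j)
        = ∑ j ∈ Finset.Icc 1 (r-1), dd (2*r-2*j+1) * βr (2*j) + dd 1 * βr (2*r) := by
      have h1 := Finset.sum_Icc_succ_top (a := 1) (b := r-1)
        (by omega : 1 ≤ r - 1 + 1) (fun j => dd (2*r-2*j+1) * βr (2*j))
      have hrr : r - 1 + 1 = r := by omega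
      rw [hrr] at h1
      rw [h1]
      have e3 : 2*r-2*r+1 = 1 := by omega
      rw [e3]
    have hIcc : ∑ j ∈ Finset.range r, dd (2*r-2*(j+1)+1) * βr (2*(j+1))
        = ∑ j ∈ Finset.Icc 1 r, dd (2*r-2*j+1) * βr (2*j) := by
      have : Finset.Icc 1 r = Finset.Ico 1 (r+1) := by
        rw [Finset.Ico_add_one_right_eq_Icc]
      rw [this, Finset.sum_Ico_eq_sum_range]
      have hrr : r + 1 - 1 = r := by omega
      rw [hrr]
      apply Finset.sum_congr rfl
      intro j hj
      congr 2 <;> omega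
    rw [hIcc, hsplit]
    ring
  rw [hA, hC]; ring

/-- the key power series identity: `(c - b) * bernoulliPowerSeries = b * X`. -/
lemma key_identity (m : ℕ) (B : ℕ → ℝ → ℝ) (hB : IsGenBernoulli m B) :
    (PowerSeries.mk (fun n => B n 1 / n !) - PowerSeries.mk (fun n => B n 0 / n !)) *
      bernoulliPowerSeries ℝ =
    PowerSeries.mk (fun n => B n 0 / n !) * PowerSeries.X := by
  set E := PowerSeries.exp ℝ - expPartialSum m with hE
  set b := PowerSeries.mk (fun n => B n 0 / n !) with hb
  set c := PowerSeries.mk (fun n => B n 1 / n !) with hc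
  have h0 : E * b = PowerSeries.X ^ m := by
    have h := hB 0
    have : PowerSeries.mk (fun n => (0:ℝ)^n / n !) = 1 := by
      ext n; cases n <;> simp [PowerSeries.coeff_one]
    rw [this, mul_one] at h
    exact h
  have h1 : E * c = PowerSeries.X ^ m * PowerSeries.exp ℝ := by
    have h := hB 1
    have : PowerSeries.mk (fun n => (1:ℝ)^n / n !) = PowerSeries.exp ℝ := by
      ext n; simp [PowerSeries.coeff_exp, algebraMap_rat_real]
    rw [this] at h
    exact h
  have hEne : E ≠ 0 := by
    intro h
    have hEm : (PowerSeries.coeff m) E = 1 / (m ! : ℝ) := by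
      simp [hE, PowerSeries.coeff_exp, coeff_expPartialSum, algebraMap_rat_real]
    rw [h] at hEm
    simp at hEm
    exact Nat.factorial_ne_zero m (by exact_mod_cast hEm.symm)
  apply mul_left_cancel₀ hEne
  calc E * ((c - b) * bernoulliPowerSeries ℝ)
      = (E * c - E * b) * bernoulliPowerSeries ℝ := by ring
    _ = (PowerSeries.X ^ m * PowerSeries.exp ℝ - PowerSeries.X ^ m) * bernoulliPowerSeries ℝ := by
        rw [h0, h1]
    _ = PowerSeries.X ^ m * (bernoulliPowerSeries ℝ * (PowerSeries.exp ℝ - 1)) := by ring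
    _ = PowerSeries.X ^ m * PowerSeries.X := by rw [bernoulliPowerSeries_mul_exp_sub_one]
    _ = E * (b * PowerSeries.X) := by rw [← h0]; ring

/-- `B 0 0 = m!`. -/
lemma b_zero (m : ℕ) (B : ℕ → ℝ → ℝ) (hB : IsGenBernoulli m B) :
    B 0 0 = (m ! : ℝ) := by
  set E := PowerSeries.exp ℝ - expPartialSum m with hE
  have h0 : E * PowerSeries.mk (fun n => B n 0 / n !) = PowerSeries.X ^ m := by
    have h := hB 0
    have : PowerSeries.mk (fun n => (0:ℝ)^n / n !) = 1 := by
      ext n; cases n <;> simp [PowerSeries.coeff_one]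
    rw [this, mul_one] at h
    exact h
  have hcm := congrArg (PowerSeries.coeff m) h0
  rw [PowerSeries.coeff_mul, Finset.Nat.sum_antidiagonal_eq_sum_range_succ_mk,
    Finset.sum_range_succ, PowerSeries.coeff_X_pow] at hcm
  have hEk : ∀ k, k < m → PowerSeries.coeff k E = 0 := by
    intro k hk
    simp [hE, PowerSeries.coeff_exp, coeff_expPartialSum, hk, algebraMap_rat_real]
  rw [Finset.sum_eq_zero (fun k hk => by
      rw [hEk k (Finset.mem_range.mp hk), zero_mul])] at hcm
  have hEm : (PowerSeries.coeff m) E = 1 / (m ! : ℝ) := by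
    simp [hE, PowerSeries.coeff_exp, coeff_expPartialSum, algebraMap_rat_real]
  rw [hEm] at hcm
  simp at hcm
  have hne : (m ! : ℝ) ≠ 0 := Nat.cast_ne_zero.mpr (Nat.factorial_ne_zero m)
  field_simp at hcm
  linarith [hcm]

/-- general coefficient identity from `key_identity`. -/
lemma hgen (m : ℕ) (B : ℕ → ℝ → ℝ) (hB : IsGenBernoulli m B) (n : ℕ) :
    ∑ k ∈ Finset.range (n+1+1),
      ((B k 1 - B k 0) / (k ! : ℝ)) * (((bernoulli (n+1-k) : ℚ) : ℝ) / ((n+1-k)! : ℝ))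
      = B n 0 / (n ! : ℝ) := by
  have h := congrArg (PowerSeries.coeff (n+1)) (key_identity m B hB)
  rw [PowerSeries.coeff_mul, Finset.Nat.sum_antidiagonal_eq_sum_range_succ_mk,
    PowerSeries.coeff_succ_mul_X] at h
  simp only [map_sub, PowerSeries.coeff_mk, bernoulliPowerSeries, algebraMap_rat_real,
    Rat.cast_div, Rat.cast_natCast] at h
  rw [← h]
  apply Finset.sum_congr rfl
  intro k _
  rw [sub_div]

/-- `B 0 1 - B 0 0 = 0`. -/
lemma d_zero (m : ℕ) (B : ℕ → ℝ → ℝ) (hB : IsGenBernoulli m B) :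
    B 0 1 - B 0 0 = 0 := by
  have h := congrArg (PowerSeries.constantCoeff) (key_identity m B hB)
  simp only [map_mul, map_sub, PowerSeries.constantCoeff_mk, PowerSeries.constantCoeff_X,
    mul_zero, bernoulliPowerSeries, algebraMap_rat_real] at h
  simpa using h

/-- `B 1 1 - B 1 0 = m!`. -/
lemma d_one (m : ℕ) (B : ℕ → ℝ → ℝ) (hB : IsGenBernoulli m B) :
    B 1 1 - B 1 0 = (m ! : ℝ) := by
  have h := hgen m B hB 0
  rw [Finset.sum_range_succ, Finset.sum_range_succ, Finset.sum_range_zero, zero_add] at h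
  simp only [Nat.factorial_zero, Nat.factorial_one, Nat.cast_one, div_one] at h
  rw [d_zero m B hB] at h
  simp only [zero_div, zero_mul, zero_add] at h
  have hb1 : ((bernoulli (0+1-1) : ℚ) : ℝ) = 1 := by norm_num
  rw [show (0+1-1 : ℕ) = 0 by rfl] at h
  simp only [bernoulli_zero, Rat.cast_one, Nat.factorial_zero, Nat.cast_one, div_one,
    mul_one] at h
  rw [h, b_zero m B hB]

end Stmt13Aux

open Stmt13Aux in
theorem stmt_13 (m : ℕ) (hm : 0 < m) (B : ℕ → ℝ → ℝ) (hB : IsGenBernoulli m B)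
    (r : ℕ) (hr : 1 ≤ r) :
    riemannZeta (2 * r) =
      ((((-1 : ℝ) ^ (r - 1) * 2 ^ (2 * r - 1) * π ^ (2 * r) * B (2 * r) 0 /
          ((m ! : ℝ) * ((2 * r)! : ℝ))) +
        ((-1 : ℝ) ^ (r - 1) * 2 ^ (2 * r - 1) * π ^ (2 * r) / (m ! : ℝ)) *
          ((B (2 * r) 1 - B (2 * r) 0) / (2 * ((2 * r)! : ℝ)) -
            (B (2 * r + 1) 1 - B (2 * r + 1) 0) / (((2 * r + 1)! : ℝ)) -
            ∑ j ∈ Finset.Icc 1 (r - 1),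
              ((B (2 * r - 2 * j + 1) 1 - B (2 * r - 2 * j + 1) 0) /
                  ((2 * r - 2 * j + 1)! : ℝ)) *
                ((bernoulli (2 * j) : ℚ) : ℝ) / ((2 * j)! : ℝ)) : ℝ) : ℂ) := by
  classical
  -- abbreviations
  set dd : ℕ → ℝ := fun n => (B n 1 - B n 0) / (n ! : ℝ) with hdd
  set βr : ℕ → ℝ := fun n => ((bernoulli n : ℚ) : ℝ) / (n ! : ℝ) with hβr
  have hodd : ∀ n, Odd n → 1 < n → βr n = 0 := by
    intro n h1 h2
    have : bernoulli n = 0 := by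
      rw [bernoulli_eq_bernoulli'_of_ne_one (by omega)]
      exact bernoulli'_eq_zero_of_odd h1 h2
    simp [hβr, this]
  have hβ0 : βr 0 = 1 := by simp [hβr]
  have hβ1 : βr 1 = -(1/2) := by norm_num [hβr, bernoulli_one]
  -- the main coefficient identity at degree 2r+1
  have hmain0 := hgen m B hB (2*r)
  have hrange : 2*r+1+1 = 2*(r+1) := by ring
  rw [hrange] at hmain0
  have hmain1 : ∑ k ∈ Finset.range (2*(r+1)), dd k * βr (2*r+1-k) = B (2*r) 0 / ((2*r)! : ℝ) := by
    rw [← hmain0]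
  rw [sum_eval r hr dd βr hodd hβ0 hβ1] at hmain1
  have hd1 : dd 1 = (m ! : ℝ) := by
    simp only [hdd]
    rw [d_one m B hB]
    simp
  rw [hd1] at hmain1
  -- now hmain1 :
  --   dd (2r+1) - dd (2r)/2 + S + m! * βr (2r) = B (2r) 0 / (2r)!
  have hmfac : (m ! : ℝ) ≠ 0 := Nat.cast_ne_zero.mpr (Nat.factorial_ne_zero m)
  -- reduce the complex goal to a real identity
  rw [riemannZeta_two_mul_nat (by omega : r ≠ 0)]
  have hcast : ((-1) ^ (r + 1) * (2 : ℂ) ^ (2 * r - 1) * (π : ℂ) ^ (2 * r) *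
        (bernoulli (2 * r) : ℂ) / ((2 * r)! : ℂ))
      = ((((-1 : ℝ) ^ (r - 1) * 2 ^ (2 * r - 1) * π ^ (2 * r) *
          ((bernoulli (2 * r) : ℚ) : ℝ) / ((2 * r)! : ℝ)) : ℝ) : ℂ) := by
    push_cast
    rw [show r + 1 = (r - 1) + 2 by omega, pow_add]
    ring
  rw [hcast, Complex.ofReal_inj]
  symm
  -- now a purely real identity
  have hS : ∑ j ∈ Finset.Icc 1 (r - 1),
        ((B (2 * r - 2 * j + 1) 1 - B (2 * r - 2 * j + 1) 0) / ((2 * r - 2 * j + 1)! : ℝ)) *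
          ((bernoulli (2 * j) : ℚ) : ℝ) / ((2 * j)! : ℝ)
      = ∑ j ∈ Finset.Icc 1 (r - 1), dd (2 * r - 2 * j + 1) * βr (2 * j) := by
    apply Finset.sum_congr rfl
    intro j _
    simp only [hdd, hβr]
    rw [mul_div_assoc]
  rw [hS]
  set S := ∑ j ∈ Finset.Icc 1 (r - 1), dd (2 * r - 2 * j + 1) * βr (2 * j) with hSdef
  have hdd2r : (B (2 * r) 1 - B (2 * r) 0) / (2 * ((2 * r)! : ℝ)) = dd (2 * r) / 2 := by
    simp only [hdd]
    rw [div_div, mul_comm ((2*r)! : ℝ) 2]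
  have hdd2r1 : (B (2 * r + 1) 1 - B (2 * r + 1) 0) / (((2 * r + 1)! : ℝ)) = dd (2 * r + 1) := by
    simp only [hdd]
  rw [hdd2r, hdd2r1]
  have hβr2r : βr (2 * r) = ((bernoulli (2 * r) : ℚ) : ℝ) / ((2 * r)! : ℝ) := rfl
  set C : ℝ := (-1 : ℝ) ^ (r - 1) * 2 ^ (2 * r - 1) * π ^ (2 * r) with hC
  calc C * B (2 * r) 0 / ((m ! : ℝ) * ((2 * r)! : ℝ)) +
        C / (m ! : ℝ) * (dd (2 * r) / 2 - dd (2 * r + 1) - S)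
      = (C / (m ! : ℝ)) *
          (B (2 * r) 0 / ((2 * r)! : ℝ) -
            (dd (2 * r + 1) - dd (2 * r) / 2 + S)) := by
        ring
    _ = (C / (m ! : ℝ)) * ((m ! : ℝ) * βr (2 * r)) := by
        rw [show B (2 * r) 0 / ((2 * r)! : ℝ) - (dd (2 * r + 1) - dd (2 * r) / 2 + S)
            = (m ! : ℝ) * βr (2 * r) by linarith [hmain1]]
    _ = C * ((bernoulli (2 * r) : ℚ) : ℝ) / ((2 * r)! : ℝ) := by
        rw [hβr2r]
        field_simp
end

section
/- Euler–Maclaurin type formula of level m: let r ≥ 1, m ∈ ℕ, and f ∈ C^r[0,1]. Then ∫_0^1 f(t) dt = (1/m!)[∑_{k=1}^r A_k^{[m-1]}(f) + ((-1)^r/r!) ∫_0^1 f^{(r)}(t) B_r^{[m-1]}(t) dt], where A_k^{[m-1]}(f) = ((-1)^k/k!)(f^{(k-1)}(0) B_k^{[m-1]} - f^{(k-1)}(1) B_k^{[m-1]}(1)). -/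
open scoped Nat Real

lemma coeff_D (m n : ℕ) :
    PowerSeries.coeff n (PowerSeries.exp ℝ - expPartialSum m) =
      if n < m then (0:ℝ) else 1 / (n ! : ℝ) := by
  rw [map_sub, PowerSeries.coeff_exp, expPartialSum, map_sum]
  simp only [map_mul, PowerSeries.coeff_C_mul, PowerSeries.coeff_X_pow]
  simp only [mul_ite, mul_one, mul_zero]
  rw [Finset.sum_ite_eq (Finset.range m) n (fun l => (1:ℝ)/l !)]
  simp only [Finset.mem_range, eq_ratCast, Rat.cast_div, Rat.cast_one, Rat.cast_natCast]
  split <;> simp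

lemma D_ne (m : ℕ) : (PowerSeries.exp ℝ - expPartialSum m) ≠ 0 := by
  intro h
  have := coeff_D m m
  rw [h] at this
  simp only [map_zero, lt_self_iff_false, if_false] at this
  have : (m ! : ℝ) ≠ 0 := Nat.cast_ne_zero.2 (Nat.factorial_ne_zero m)
  simp_all

lemma mk_zero_pow : PowerSeries.mk (fun n => (0:ℝ) ^ n / n !) = 1 := by
  ext n
  cases n <;> simp [PowerSeries.coeff_mk, PowerSeries.coeff_one]

lemma mk_eq_mul (m : ℕ) (B : ℕ → ℝ → ℝ) (hB : IsGenBernoulli m B) (x : ℝ) :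
    PowerSeries.mk (fun n => B n x / n !) =
      PowerSeries.mk (fun n => B n 0 / n !) * PowerSeries.mk (fun n => x ^ n / n !) := by
  apply mul_left_cancel₀ (D_ne m)
  rw [hB x, ← mul_assoc, hB 0, mk_zero_pow, mul_one]

lemma B_formula (m : ℕ) (B : ℕ → ℝ → ℝ) (hB : IsGenBernoulli m B) (n : ℕ) (x : ℝ) :
    B n x = ∑ k ∈ Finset.range (n+1), (n.choose k : ℝ) * B k 0 * x ^ (n - k) := by
  have h := congrArg (PowerSeries.coeff n) (mk_eq_mul m B hB x)
  rw [PowerSeries.coeff_mk, PowerSeries.coeff_mul,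
    Finset.Nat.sum_antidiagonal_eq_sum_range_succ_mk] at h
  simp only [PowerSeries.coeff_mk] at h
  have hn : (n ! : ℝ) ≠ 0 := Nat.cast_ne_zero.2 (Nat.factorial_ne_zero n)
  have h2 : B n x = n ! * ∑ k ∈ Finset.range (n+1), B k 0 / k ! * (x ^ (n-k) / (n-k)!) := by
    rw [← h]; field_simp
  rw [h2, Finset.mul_sum]
  apply Finset.sum_congr rfl
  intro k hk
  have hkn : k ≤ n := Nat.lt_succ_iff.1 (Finset.mem_range.1 hk)
  rw [Nat.cast_choose ℝ hkn]
  have hk1 : (k ! : ℝ) ≠ 0 := Nat.cast_ne_zero.2 (Nat.factorial_ne_zero k)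
  have hk2 : ((n-k)! : ℝ) ≠ 0 := Nat.cast_ne_zero.2 (Nat.factorial_ne_zero (n-k))
  field_simp

lemma B_zero (m : ℕ) (B : ℕ → ℝ → ℝ) (hB : IsGenBernoulli m B) (x : ℝ) :
    B 0 x = m ! := by
  have h := congrArg (PowerSeries.coeff m) (hB 0)
  rw [PowerSeries.coeff_mul, Finset.Nat.sum_antidiagonal_eq_sum_range_succ_mk,
    PowerSeries.coeff_mul, Finset.Nat.sum_antidiagonal_eq_sum_range_succ_mk] at h
  simp only [coeff_D, PowerSeries.coeff_mk, PowerSeries.coeff_X_pow] at h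
  rw [Finset.sum_eq_single m, Finset.sum_eq_single m] at h
  · simp only [lt_self_iff_false, if_false, Nat.sub_self, if_pos rfl, Nat.factorial_zero,
      Nat.cast_one, pow_zero, div_one, one_mul] at h
    have hm : (m ! : ℝ) ≠ 0 := Nat.cast_ne_zero.2 (Nat.factorial_ne_zero m)
    have h0 : B 0 0 = m ! := by
      field_simp at h
      simpa using h
    rw [B_formula m B hB 0 x]
    simpa using h0
  · intro b hb hbm
    have : b < m := by
      rcases Nat.lt_succ_iff.1 (Finset.mem_range.1 hb) |>.lt_or_eq with h' | h'
      · exact h'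
      · exact absurd h' hbm
    simp [Nat.ne_of_lt this]
  · intro h'; exact absurd (Finset.mem_range.2 (Nat.lt_succ_self m)) h'
  · intro b hb hbm
    have : b < m := by
      rcases Nat.lt_succ_iff.1 (Finset.mem_range.1 hb) |>.lt_or_eq with h' | h'
      · exact h'
      · exact absurd h' hbm
    simp [if_pos this]
  · intro h'; exact absurd (Finset.mem_range.2 (Nat.lt_succ_self m)) h'

lemma B_continuous (m : ℕ) (B : ℕ → ℝ → ℝ) (hB : IsGenBernoulli m B) (n : ℕ) :
    Continuous (B n) := by
  have : B n = fun x => ∑ k ∈ Finset.range (n+1), (n.choose k : ℝ) * B k 0 * x ^ (n - k) := by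
    funext x; exact B_formula m B hB n x
  rw [this]
  exact continuous_finset_sum _ fun k _ => (continuous_const.mul (continuous_pow _))

lemma B_hasDerivAt (m : ℕ) (B : ℕ → ℝ → ℝ) (hB : IsGenBernoulli m B) (n : ℕ) (x : ℝ) :
    HasDerivAt (B (n+1)) ((n+1) * B n x) x := by
  have hfun : B (n+1) = fun y =>
      ∑ k ∈ Finset.range (n+2), ((n+1).choose k : ℝ) * B k 0 * y ^ (n+1-k) := by
    funext y; exact B_formula m B hB (n+1) y
  rw [hfun]
  have hd : HasDerivAt (fun y : ℝ =>
      ∑ k ∈ Finset.range (n+2), ((n+1).choose k : ℝ) * B k 0 * y ^ (n+1-k))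
      (∑ k ∈ Finset.range (n+2), ((n+1).choose k : ℝ) * B k 0 *
        ((n+1-k : ℕ) * x ^ (n+1-k-1))) x := by
    apply HasDerivAt.fun_sum
    intro k _
    exact (hasDerivAt_pow (n+1-k) x).const_mul _
  convert hd using 1
  rw [B_formula m B hB n x, Finset.mul_sum]
  rw [Finset.sum_range_succ (fun k => ((n+1).choose k : ℝ) * B k 0 * ((n+1-k : ℕ) * x ^ (n+1-k-1))) (n+1)]
  simp only [Nat.sub_self, Nat.cast_zero, zero_mul, mul_zero, add_zero]
  apply Finset.sum_congr rfl
  intro k hk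
  have hkn : k ≤ n := Nat.lt_succ_iff.1 (Finset.mem_range.1 hk)
  have hnat : n.choose k * (n + 1) = (n + 1).choose k * (n + 1 - k) := Nat.choose_mul_succ_eq n k
  have hcast : ((n+1).choose k : ℝ) * ((n+1-k : ℕ) : ℝ) = (n.choose k : ℝ) * (n+1 : ℕ) := by
    exact_mod_cast congrArg (Nat.cast (R := ℝ)) hnat.symm
  have hexp : n + 1 - k - 1 = n - k := by omega
  rw [hexp]
  push_cast at hcast ⊢
  linear_combination (-(B k 0 * x ^ (n - k))) * hcast

lemma main_aux (m : ℕ) (hm : 0 < m) (B : ℕ → ℝ → ℝ) (hB : IsGenBernoulli m B) :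
    ∀ (r : ℕ) (f : ℝ → ℝ), ContDiffOn ℝ r f (Set.Icc 0 1) →
    ∫ t in (0:ℝ)..1, f t =
      (1 / (m ! : ℝ)) *
        ((∑ k ∈ Finset.Icc 1 r, ((-1:ℝ)^k / (k ! : ℝ)) *
            (iteratedDerivWithin (k-1) f (Set.Icc 0 1) 0 * B k 0 -
              iteratedDerivWithin (k-1) f (Set.Icc 0 1) 1 * B k 1)) +
          ((-1:ℝ)^r / (r ! : ℝ)) *
            ∫ t in (0:ℝ)..1, iteratedDerivWithin r f (Set.Icc 0 1) t * B r t) := by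
  intro r
  induction r with
  | zero =>
    intro f hf
    have hme : (m ! : ℝ) ≠ 0 := Nat.cast_ne_zero.2 (Nat.factorial_ne_zero m)
    simp only [Finset.Icc_eq_empty_of_lt Nat.zero_lt_one, Finset.sum_empty, zero_add,
      pow_zero, Nat.factorial_zero, Nat.cast_one, div_one, one_mul, iteratedDerivWithin_zero]
    simp only [B_zero m B hB]
    rw [intervalIntegral.integral_mul_const]
    field_simp
  | succ r ih =>
    intro f hf
    have hf' : ContDiffOn ℝ r f (Set.Icc 0 1) := hf.of_le (by exact_mod_cast Nat.le_succ r)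
    have hUD : UniqueDiffOn ℝ (Set.Icc (0:ℝ) 1) := uniqueDiffOn_Icc zero_lt_one
    have hsub : Set.uIcc (0:ℝ) 1 = Set.Icc 0 1 := Set.uIcc_of_le zero_le_one
    have hr1 : ((r:ℝ) + 1) ≠ 0 := by positivity
    have hu : ∀ x ∈ Set.uIcc (0:ℝ) 1, HasDerivWithinAt (iteratedDerivWithin r f (Set.Icc 0 1)) (iteratedDerivWithin (r+1) f (Set.Icc 0 1) x) (Set.uIcc (0:ℝ) 1) x := by
      rw [hsub]
      intro x hx
      have hdiff := hf.differentiableOn_iteratedDerivWithin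
        (by exact_mod_cast lt_add_one r) hUD x hx
      have h2 := hdiff.hasDerivWithinAt
      rwa [← iteratedDerivWithin_succ] at h2
    have hv : ∀ x ∈ Set.uIcc (0:ℝ) 1,
        HasDerivWithinAt (fun t => B (r+1) t / ((r:ℝ)+1)) (B r x) (Set.uIcc (0:ℝ) 1) x := by
      intro x _
      have h := (B_hasDerivAt m B hB r x).div_const ((r:ℝ)+1)
      have heq : ((r:ℝ)+1) * B r x / ((r:ℝ)+1) = B r x := by field_simp
      rw [heq] at h
      exact h.hasDerivWithinAt
    have hu'int : IntervalIntegrable (iteratedDerivWithin (r+1) f (Set.Icc 0 1)) MeasureTheory.volume 0 1 := by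
      apply ContinuousOn.intervalIntegrable
      rw [hsub]
      exact hf.continuousOn_iteratedDerivWithin le_rfl hUD
    have hvint : IntervalIntegrable (B r) MeasureTheory.volume 0 1 :=
      (B_continuous m B hB r).intervalIntegrable 0 1
    have IBP := intervalIntegral.integral_mul_deriv_eq_deriv_mul_of_hasDerivWithinAt
      hu hv hu'int hvint
    have hmove : (∫ x in (0:ℝ)..1, iteratedDerivWithin (r+1) f (Set.Icc 0 1) x * (B (r+1) x / ((r:ℝ)+1))) =
        (∫ x in (0:ℝ)..1, iteratedDerivWithin (r+1) f (Set.Icc 0 1) x * B (r+1) x) / ((r:ℝ)+1) := by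
      simp_rw [← mul_div_assoc]
      exact intervalIntegral.integral_div _ _
    rw [hmove] at IBP
    rw [ih f hf']
    rw [Finset.sum_Icc_succ_top (Nat.le_add_left 1 r)]
    rw [IBP]
    have hfact : ((r+1)! : ℝ) = ((r:ℝ)+1) * (r ! : ℝ) := by
      rw [Nat.factorial_succ]; push_cast; ring
    have hre : (r ! : ℝ) ≠ 0 := Nat.cast_ne_zero.2 (Nat.factorial_ne_zero r)
    simp only [Nat.add_sub_cancel, pow_succ, hfact]
    field_simp
    ring

theorem stmt_15 (m : ℕ) (hm : 0 < m) (B : ℕ → ℝ → ℝ) (hB : IsGenBernoulli m B)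
    (r : ℕ) (hr : 1 ≤ r) (f : ℝ → ℝ) (hf : ContDiffOn ℝ r f (Set.Icc 0 1)) :
    ∫ t in (0 : ℝ)..1, f t =
      (1 / (m ! : ℝ)) *
        ((∑ k ∈ Finset.Icc 1 r, ((-1 : ℝ) ^ k / (k ! : ℝ)) *
            (iteratedDerivWithin (k - 1) f (Set.Icc 0 1) 0 * B k 0 -
              iteratedDerivWithin (k - 1) f (Set.Icc 0 1) 1 * B k 1)) +
          ((-1 : ℝ) ^ r / (r ! : ℝ)) *
            ∫ t in (0 : ℝ)..1, iteratedDerivWithin r f (Set.Icc 0 1) t * B r t) := by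
  exact main_aux m hm B hB r f hf
end

section
/- Integral-series comparison via level-m Euler–Maclaurin: let m, r ∈ ℕ, f ∈ C^r[1,∞). Assume the series ρ_r^{[m-1]}(1,∞) := lim_{q→∞} (1/m!) ∑_{j=2}^{q-1} ∑_{k=2}^{r} ((-1)^{k+1}/k!)(B_k^{[m-1]}(1) - B_k^{[m-1]}) f^{(k-1)}(j) converges, that ∫_1^∞ |f^{(r)}(t)| dt converges, and that lim_{n→∞} f(n) exists and is finite. Then ∫_1^∞ f(t) dt converges if and only if ∑_{j=1}^∞ f(j) converges. -/
open scoped Nat Real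

namespace Stmt19
open scoped Nat

open intervalIntegral MeasureTheory Filter Set

noncomputable def Qker (δ : ℕ → ℝ) : ℕ → ℝ → ℝ
  | 0 => fun _ => (1:ℝ)
  | (j+1) => fun x => (∫ t in (0:ℝ)..x, Qker δ j t) +
      (δ (j+2) - ∫ y in (0:ℝ)..(1:ℝ), (∫ t in (0:ℝ)..y, Qker δ j t))

lemma primitive_hasDerivAt {g : ℝ → ℝ} (hg : Continuous g) (x : ℝ) :
    HasDerivAt (fun u => ∫ t in (0:ℝ)..u, g t) (g x) x :=
  intervalIntegral.integral_hasDerivAt_right (hg.intervalIntegrable _ _)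
    (hg.stronglyMeasurableAtFilter _ _) hg.continuousAt

lemma Qker_continuous (δ : ℕ → ℝ) : ∀ j, Continuous (Qker δ j) := by
  intro j
  induction j with
  | zero => exact continuous_const
  | succ j ih =>
    have : ∀ x, HasDerivAt (fun u => ∫ t in (0:ℝ)..u, Qker δ j t) (Qker δ j x) x :=
      primitive_hasDerivAt ih
    exact ((continuous_iff_continuousAt.2 fun x => (this x).continuousAt).add continuous_const)

lemma Qker_hasDerivAt (δ : ℕ → ℝ) (j : ℕ) (x : ℝ) :
    HasDerivAt (Qker δ (j+1)) (Qker δ j x) x :=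
  ((primitive_hasDerivAt (Qker_continuous δ j) x).add_const _)

lemma Qker_sub_eq (δ : ℕ → ℝ) (j : ℕ) :
    Qker δ (j+1) 1 - Qker δ (j+1) 0 = ∫ t in (0:ℝ)..1, Qker δ j t := by
  simp [Qker]

lemma Qker_integral01 (δ : ℕ → ℝ) (j : ℕ) :
    ∫ t in (0:ℝ)..1, Qker δ (j+1) t = δ (j+2) := by
  have hc : Continuous fun y => ∫ t in (0:ℝ)..y, Qker δ j t :=
    continuous_iff_continuousAt.2 fun x =>
      (primitive_hasDerivAt (Qker_continuous δ j) x).continuousAt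
  simp only [Qker]
  rw [intervalIntegral.integral_add (hc.intervalIntegrable _ _)
    (continuous_const.intervalIntegrable _ _)]
  simp

lemma Qker_diff (δ : ℕ → ℝ) (k : ℕ) (hk : 2 ≤ k) :
    Qker δ k 1 - Qker δ k 0 = δ k := by
  obtain ⟨j, rfl⟩ : ∃ j, k = j + 2 := ⟨k - 2, by omega⟩
  rw [show j + 2 = (j+1) + 1 from rfl, Qker_sub_eq, Qker_integral01]

lemma Qker_one_diff (δ : ℕ → ℝ) : Qker δ 1 1 - Qker δ 1 0 = 1 := by
  rw [Qker_sub_eq]; simp [Qker]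


variable {f : ℝ → ℝ} {r : ℕ}

lemma F_hasDerivAt (hf : ContDiffOn ℝ r f (Ici 1)) {k : ℕ} (hk : k < r) {x : ℝ} (hx : 1 < x) :
    HasDerivAt (iteratedDerivWithin k f (Ici 1))
      (iteratedDerivWithin (k+1) f (Ici 1) x) x := by
  have hd : DifferentiableOn ℝ (iteratedDerivWithin k f (Ici 1)) (Ici 1) :=
    hf.differentiableOn_iteratedDerivWithin (by exact_mod_cast hk) (uniqueDiffOn_Ici 1)
  have hmem : Ici (1:ℝ) ∈ nhds x := Ici_mem_nhds hx
  have hda := (hd x hx.le).differentiableAt hmem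
  have heq : iteratedDerivWithin (k+1) f (Ici 1) x
      = deriv (iteratedDerivWithin k f (Ici 1)) x := by
    rw [iteratedDerivWithin_succ,
      derivWithin_of_mem_nhds hmem]
  rw [heq]
  exact hda.hasDerivAt

lemma F_continuousOn (hf : ContDiffOn ℝ r f (Ici 1)) {k : ℕ} (hk : k ≤ r) :
    ContinuousOn (iteratedDerivWithin k f (Ici 1)) (Ici 1) :=
  hf.continuousOn_iteratedDerivWithin (by exact_mod_cast hk) (uniqueDiffOn_Ici 1)

lemma F_intervalIntegrable (hf : ContDiffOn ℝ r f (Ici 1)) {k : ℕ} (hk : k ≤ r)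
    {a b : ℝ} (ha : 1 ≤ a) (hab : a ≤ b) :
    IntervalIntegrable (iteratedDerivWithin k f (Ici 1)) volume a b := by
  apply ContinuousOn.intervalIntegrable
  apply (F_continuousOn hf hk).mono
  rw [Set.uIcc_of_le hab]
  exact fun t ht => le_trans ha ht.1

lemma F_FTC (hf : ContDiffOn ℝ r f (Ici 1)) {k : ℕ} (hk : k < r)
    {a b : ℝ} (ha : 1 < a) (hab : a ≤ b) :
    ∫ t in a..b, iteratedDerivWithin (k+1) f (Ici 1) t
      = iteratedDerivWithin k f (Ici 1) b - iteratedDerivWithin k f (Ici 1) a := by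
  apply intervalIntegral.integral_eq_sub_of_hasDerivAt
  · intro x hx
    rw [Set.uIcc_of_le hab] at hx
    exact F_hasDerivAt hf hk (lt_of_lt_of_le ha hx.1)
  · exact F_intervalIntegrable hf hk ha.le hab

/-- iterated forward difference with step 1 -/
def fdiff : ℕ → (ℝ → ℝ) → ℝ → ℝ
  | 0, g => g
  | (i+1), g => fun a => fdiff i g (a+1) - fdiff i g a

lemma fdiff_succ_eq (i : ℕ) (g : ℝ → ℝ) (a : ℝ) :
    fdiff (i+1) g a = fdiff i (fun x => g (x+1) - g x) a := by
  induction i generalizing a with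
  | zero => rfl
  | succ i ih =>
    show fdiff (i+1) g (a+1) - fdiff (i+1) g a = _
    rw [ih, ih]
    rfl

lemma fdiff_neg (i : ℕ) (g : ℝ → ℝ) (a : ℝ) :
    fdiff i (fun x => -(g x)) a = - fdiff i g a := by
  induction i generalizing a with
  | zero => rfl
  | succ i ih => show fdiff i _ (a+1) - fdiff i _ a = _; rw [ih, ih]; show _ = -(fdiff i g (a+1) - fdiff i g a); ring

lemma fdiff_tendsto (L : ℝ) (hlim : Tendsto (fun n : ℕ => f n) atTop (nhds L)) :
    ∀ i : ℕ, Tendsto (fun n : ℕ => fdiff i f n) atTop (nhds (if i = 0 then L else 0)) := by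
  intro i
  induction i with
  | zero => simpa [fdiff] using hlim
  | succ i ih =>
    have h1 : Tendsto (fun n : ℕ => fdiff i f (↑(n+1))) atTop (nhds (if i = 0 then L else 0)) :=
      ih.comp (tendsto_add_atTop_nat 1)
    have h2 : Tendsto (fun n : ℕ => fdiff i f (↑n + 1)) atTop (nhds (if i = 0 then L else 0)) := by
      convert h1 using 2 with n
      push_cast
      ring
    have := h2.sub ih
    simpa [fdiff] using this

lemma lower_bound_fdiff :
    ∀ (i : ℕ) (G : ℕ → ℝ → ℝ),
      (∀ k < i, ∀ x : ℝ, 1 < x → HasDerivAt (G k) (G (k+1) x) x) →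
      (ContinuousOn (G i) (Ioi 1)) →
      ∀ (a η : ℝ), 2 ≤ a → (∀ t ∈ Icc a (a + i), η ≤ G i t) →
      η ≤ fdiff i (G 0) a := by
  intro i
  induction i with
  | zero =>
    intro G _ _ a η ha hbound
    simpa [fdiff] using hbound a (by simp)
  | succ i ih =>
    intro G hd hc a η ha hbound
    set G' : ℕ → ℝ → ℝ := fun k x => G k (x+1) - G k x with hG'
    have hshift : ∀ k ≤ i, ∀ x : ℝ, 1 < x →
        HasDerivAt (fun y => G k (y+1)) (G (k+1) (x+1)) x := by
      intro k hk x hx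
      have h := (hd k (by omega) (x+1) (by linarith)).comp x ((hasDerivAt_id x).add_const 1)
      simpa [Function.comp_def] using h
    have hd' : ∀ k < i, ∀ x : ℝ, 1 < x → HasDerivAt (G' k) (G' (k+1) x) x := by
      intro k hk x hx
      exact (hshift k (by omega) x hx).sub (hd k (by omega) x hx)
    have hc' : ContinuousOn (G' i) (Ioi 1) := by
      intro x hx
      have hx' : (1:ℝ) < x := hx
      have c1 := ((hshift i le_rfl x hx')).continuousAt
      have c2 := (hd i (by omega) x hx').continuousAt
      exact (c1.sub c2).continuousWithinAt
    have hbound' : ∀ t ∈ Icc a (a + (i:ℝ)), η ≤ G' i t := by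
      intro t ht
      have h2t : (2:ℝ) ≤ t := le_trans ha ht.1
      have hFTC : ∫ s in t..(t+1), G (i+1) s = G i (t+1) - G i t := by
        apply intervalIntegral.integral_eq_sub_of_hasDerivAt
        · intro x hx
          rw [Set.uIcc_of_le (by linarith : t ≤ t+1)] at hx
          exact hd i (by omega) x (by have := hx.1; linarith)
        · apply ContinuousOn.intervalIntegrable
          apply hc.mono
          rw [Set.uIcc_of_le (by linarith : t ≤ t+1)]
          intro s hs
          show (1:ℝ) < s
          have := hs.1; linarith
      have hmono : η * (t + 1 - t) ≤ ∫ s in t..(t+1), G (i+1) s := by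
        have : ∫ s in t..(t+1), η ≤ ∫ s in t..(t+1), G (i+1) s := by
          apply intervalIntegral.integral_mono_on (by linarith)
            (intervalIntegrable_const)
          · apply ContinuousOn.intervalIntegrable
            apply hc.mono
            rw [Set.uIcc_of_le (by linarith : t ≤ t+1)]
            intro s hs
            show (1:ℝ) < s
            have := hs.1; linarith
          · intro s hs
            apply hbound s
            constructor
            · linarith [ht.1, hs.1]
            · have := hs.2
              have h2 := ht.2
              push_cast at h2 ⊢
              linarith
        simpa using this
      show η ≤ G i (t+1) - G i t
      rw [← hFTC]
      simpa using hmono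
    have := ih G' hd' hc' a η ha (by
      intro t ht
      apply hbound'
      constructor
      · exact ht.1
      · have := ht.2; push_cast at this ⊢; linarith)
    rw [fdiff_succ_eq]
    exact this



section ClaimB

variable {f : ℝ → ℝ} {r : ℕ}

lemma F_small_of_osc (hf : ContDiffOn ℝ r f (Ici 1)) {L : ℝ}
    (hlim : Tendsto (fun n : ℕ => f n) atTop (nhds L))
    {i : ℕ} (h1 : 1 ≤ i) (hir : i < r)
    (hosc : ∀ ε > 0, ∃ N : ℝ, 2 ≤ N ∧ ∀ x y : ℝ, N ≤ x → N ≤ y → |y - x| ≤ r →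
      |iteratedDerivWithin i f (Ici 1) y - iteratedDerivWithin i f (Ici 1) x| ≤ ε) :
    Tendsto (fun x : ℝ => iteratedDerivWithin i f (Ici 1) x) atTop (nhds 0) := by
  rw [Metric.tendsto_atTop]
  intro ε hε
  obtain ⟨N₀, hN₀2, hN₀⟩ := hosc (ε/3) (by linarith)
  have hfd : Tendsto (fun n : ℕ => fdiff i f n) atTop (nhds 0) := by
    have := fdiff_tendsto L hlim i
    rwa [if_neg (by omega)] at this
  rw [Metric.tendsto_atTop] at hfd
  obtain ⟨N₁, hN₁⟩ := hfd (ε/3) (by linarith)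
  refine ⟨max (N₀ + 1) ((N₁ : ℝ) + 2), fun x hx => ?_⟩
  have hx1 : N₀ + 1 ≤ x := le_trans (le_max_left _ _) hx
  have hx2 : (N₁ : ℝ) + 2 ≤ x := le_trans (le_max_right _ _) hx
  set n : ℕ := ⌊x⌋₊ with hn
  have hx0 : (0:ℝ) ≤ x := by linarith
  have hnx : (n : ℝ) ≤ x := Nat.floor_le hx0
  have hxn : x < (n : ℝ) + 1 := Nat.lt_floor_add_one x
  have hnN₀ : N₀ ≤ (n : ℝ) := by linarith
  have hnN₁ : N₁ ≤ n := by
    have : (N₁ : ℝ) ≤ (n : ℝ) := by linarith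
    exact_mod_cast this
  have hn2 : (2 : ℝ) ≤ (n : ℝ) := by linarith
  have hfdn : |fdiff i f (n : ℝ)| < ε/3 := by
    have := hN₁ n hnN₁
    simpa [Real.dist_eq] using this
  have hwin : ∀ t ∈ Icc (n : ℝ) ((n : ℝ) + i), |iteratedDerivWithin i f (Ici 1) t -
      iteratedDerivWithin i f (Ici 1) x| ≤ ε/3 := by
    intro t ht
    apply hN₀ x t (by linarith) (by linarith [ht.1])
    have h1t : t - x ≤ (i:ℝ) := by have := ht.2; linarith
    have h2t : x - t ≤ 1 := by have := ht.1; linarith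
    have hir' : (i : ℝ) ≤ (r : ℝ) := by exact_mod_cast hir.le
    have h1r : (1:ℝ) ≤ (r:ℝ) := by exact_mod_cast (by omega : 1 ≤ r)
    rw [abs_sub_le_iff]
    constructor <;> linarith
  have hchain : ∀ k < i, ∀ y : ℝ, 1 < y →
      HasDerivAt (iteratedDerivWithin k f (Ici 1)) (iteratedDerivWithin (k+1) f (Ici 1) y) y :=
    fun k hk y hy => F_hasDerivAt hf (by omega) hy
  have hcont : ContinuousOn (iteratedDerivWithin i f (Ici 1)) (Ioi 1) :=
    (F_continuousOn hf hir.le).mono Set.Ioi_subset_Ici_self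
  rw [Real.dist_eq, sub_zero]
  rcases le_or_gt 0 (iteratedDerivWithin i f (Ici 1) x) with hpos | hneg
  · have hlow := lower_bound_fdiff i (fun k => iteratedDerivWithin k f (Ici 1)) hchain hcont
      (n : ℝ) (iteratedDerivWithin i f (Ici 1) x - ε/3) hn2
      (fun t ht => by have := hwin t ht; rw [abs_sub_le_iff] at this; linarith [this.2])
    rw [iteratedDerivWithin_zero] at hlow
    rw [abs_of_nonneg hpos]
    have := abs_le.mp hfdn.le
    linarith [this.2]
  · have hlow := lower_bound_fdiff i (fun k y => -(iteratedDerivWithin k f (Ici 1) y))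
      (fun k hk y hy => (hchain k hk y hy).neg) hcont.neg
      (n : ℝ) (-(iteratedDerivWithin i f (Ici 1) x) - ε/3) hn2
      (fun t ht => by have := hwin t ht; rw [abs_sub_le_iff] at this; linarith [this.1])
    simp only [iteratedDerivWithin_zero] at hlow
    rw [fdiff_neg i f] at hlow
    rw [abs_of_neg hneg]
    have := abs_le.mp hfdn.le
    linarith [this.1]

end ClaimB

section Osc

variable {f : ℝ → ℝ} {r : ℕ}

lemma F_top_osc (hf : ContDiffOn ℝ r f (Ici 1))
    (hint : IntegrableOn (fun t => |iteratedDerivWithin r f (Ici 1) t|) (Ici (1:ℝ)))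
    {k : ℕ} (hk : k + 1 = r) :
    ∀ ε > 0, ∃ N : ℝ, 2 ≤ N ∧ ∀ x y : ℝ, N ≤ x → N ≤ y → |y - x| ≤ r →
      |iteratedDerivWithin k f (Ici 1) y - iteratedDerivWithin k f (Ici 1) x| ≤ ε := by
  intro ε hε
  have hioi : IntegrableOn (fun t => |iteratedDerivWithin r f (Ici 1) t|) (Ioi (2:ℝ)) :=
    hint.mono_set (fun t ht => by
      have : (2:ℝ) < t := ht
      exact le_of_lt (lt_of_le_of_lt one_le_two this))
  have htends := MeasureTheory.intervalIntegral_tendsto_integral_Ioi 2 hioi tendsto_id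
  rw [Metric.tendsto_atTop] at htends
  obtain ⟨N, hN⟩ := htends (ε/2) (by linarith)
  refine ⟨max 2 N, le_max_left _ _, ?_⟩
  have key : ∀ x y : ℝ, max 2 N ≤ x → max 2 N ≤ y → x ≤ y →
      |iteratedDerivWithin k f (Ici 1) y - iteratedDerivWithin k f (Ici 1) x| ≤ ε := by
    intro x y hx hy hxy
    have hx2 : (2:ℝ) ≤ x := le_trans (le_max_left _ _) hx
    have hy2 : (2:ℝ) ≤ y := le_trans (le_max_left _ _) hy
    have hxN : N ≤ x := le_trans (le_max_right _ _) hx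
    have hyN : N ≤ y := le_trans (le_max_right _ _) hy
    have hFTC : ∫ t in x..y, iteratedDerivWithin (k+1) f (Ici 1) t
        = iteratedDerivWithin k f (Ici 1) y - iteratedDerivWithin k f (Ici 1) x :=
      F_FTC hf (by omega) (by linarith) hxy
    rw [← hFTC]
    have habs : |∫ t in x..y, iteratedDerivWithin (k+1) f (Ici 1) t|
        ≤ ∫ t in x..y, |iteratedDerivWithin (k+1) f (Ici 1) t| :=
      intervalIntegral.abs_integral_le_integral_abs hxy
    have hik : ∀ a b : ℝ, 1 ≤ a → a ≤ b → IntervalIntegrable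
        (fun t => |iteratedDerivWithin r f (Ici 1) t|) volume a b := by
      intro a b ha hab
      apply ContinuousOn.intervalIntegrable
      apply ((F_continuousOn hf le_rfl).abs).mono
      rw [Set.uIcc_of_le hab]
      exact fun t ht => le_trans ha ht.1
    have hadd : (∫ t in (2:ℝ)..x, |iteratedDerivWithin r f (Ici 1) t|)
        + (∫ t in x..y, |iteratedDerivWithin r f (Ici 1) t|)
        = ∫ t in (2:ℝ)..y, |iteratedDerivWithin r f (Ici 1) t| :=
      intervalIntegral.integral_add_adjacent_intervals (hik 2 x (by norm_num) hx2)
        (hik x y (by linarith) hxy)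
    have h1 := hN x hxN
    have h2 := hN y hyN
    rw [Real.dist_eq] at h1 h2
    simp only [id] at h1 h2
    rw [hk] at habs ⊢
    calc |∫ t in x..y, iteratedDerivWithin r f (Ici 1) t|
        ≤ ∫ t in x..y, |iteratedDerivWithin r f (Ici 1) t| := habs
      _ = (∫ t in (2:ℝ)..y, |iteratedDerivWithin r f (Ici 1) t|)
          - (∫ t in (2:ℝ)..x, |iteratedDerivWithin r f (Ici 1) t|) := by linarith
      _ ≤ ε := by
          have a1 := abs_lt.mp h1
          have a2 := abs_lt.mp h2
          linarith [a1.1, a1.2, a2.1, a2.2]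
  intro x y hx hy _
  rcases le_total x y with h | h
  · exact key x y hx hy h
  · rw [abs_sub_comm]
    exact key y x hy hx h

lemma F_mid_osc (hf : ContDiffOn ℝ r f (Ici 1)) {i : ℕ} (hir : i + 1 ≤ r)
    (ht : Tendsto (fun x : ℝ => iteratedDerivWithin (i+1) f (Ici 1) x) atTop (nhds 0)) :
    ∀ ε > 0, ∃ N : ℝ, 2 ≤ N ∧ ∀ x y : ℝ, N ≤ x → N ≤ y → |y - x| ≤ r →
      |iteratedDerivWithin i f (Ici 1) y - iteratedDerivWithin i f (Ici 1) x| ≤ ε := by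
  intro ε hε
  have hrpos : (0:ℝ) < (r:ℝ) + 1 := by positivity
  rw [Metric.tendsto_atTop] at ht
  obtain ⟨N, hN⟩ := ht (ε/((r:ℝ)+1)) (by positivity)
  refine ⟨max 2 N, le_max_left _ _, ?_⟩
  have key : ∀ x y : ℝ, max 2 N ≤ x → max 2 N ≤ y → x ≤ y → y - x ≤ r →
      |iteratedDerivWithin i f (Ici 1) y - iteratedDerivWithin i f (Ici 1) x| ≤ ε := by
    intro x y hx hy hxy hd
    have hx2 : (2:ℝ) ≤ x := le_trans (le_max_left _ _) hx
    have hxN : N ≤ x := le_trans (le_max_right _ _) hx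
    have hFTC := F_FTC hf (by omega : i < r) (by linarith : (1:ℝ) < x) hxy
    rw [← hFTC]
    have hb : ∀ t ∈ Set.uIoc x y, ‖iteratedDerivWithin (i+1) f (Ici 1) t‖ ≤ ε/((r:ℝ)+1) := by
      intro t htm
      rw [Set.uIoc_of_le hxy] at htm
      have := hN t (by linarith [htm.1])
      rw [Real.dist_eq, sub_zero] at this
      exact this.le
    have := intervalIntegral.norm_integral_le_of_norm_le_const hb
    rw [Real.norm_eq_abs] at this
    calc |∫ t in x..y, iteratedDerivWithin (i+1) f (Ici 1) t| ≤ ε/((r:ℝ)+1) * |y - x| := this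
      _ ≤ ε/((r:ℝ)+1) * ((r:ℝ)+1) := by
          apply mul_le_mul_of_nonneg_left _ (by positivity)
          rw [abs_of_nonneg (by linarith)]
          linarith
      _ = ε := by field_simp
  intro x y hx hy hd
  rcases le_total x y with h | h
  · exact key x y hx hy h (by rw [abs_of_nonneg (by linarith)] at hd; linarith)
  · rw [abs_sub_comm]
    rw [abs_sub_comm] at hd
    exact key y x hy hx h (by rw [abs_of_nonneg (by linarith)] at hd; linarith)

lemma F_tendsto_zero (hf : ContDiffOn ℝ r f (Ici 1))
    (hint : IntegrableOn (fun t => |iteratedDerivWithin r f (Ici 1) t|) (Ici (1:ℝ)))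
    {L : ℝ} (hlim : Tendsto (fun n : ℕ => f n) atTop (nhds L)) :
    ∀ i, 1 ≤ i → i < r →
      Tendsto (fun x : ℝ => iteratedDerivWithin i f (Ici 1) x) atTop (nhds 0) := by
  suffices h : ∀ d i, 1 ≤ i → i + d + 1 = r →
      Tendsto (fun x : ℝ => iteratedDerivWithin i f (Ici 1) x) atTop (nhds 0) by
    intro i h1 h2
    exact h (r - i - 1) i h1 (by omega)
  intro d
  induction d with
  | zero =>
    intro i h1 hir
    exact F_small_of_osc hf hlim h1 (by omega) (F_top_osc hf hint (by omega))
  | succ d ih =>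
    intro i h1 hir
    have hnext := ih (i+1) (by omega) (by omega)
    exact F_small_of_osc hf hlim h1 (by omega) (F_mid_osc hf (by omega) hnext)

end Osc

section IBP

variable {f : ℝ → ℝ} {r : ℕ}

lemma IBP_step (hf : ContDiffOn ℝ r f (Ici 1)) (δ : ℕ → ℝ) {i : ℕ} (hi : i < r)
    {a : ℝ} (ha : 2 ≤ a) :
    ∫ t in a..(a+1), iteratedDerivWithin i f (Ici 1) t * Qker δ i (t-a)
    = Qker δ (i+1) 1 * iteratedDerivWithin i f (Ici 1) (a+1)
      - Qker δ (i+1) 0 * iteratedDerivWithin i f (Ici 1) a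
      - ∫ t in a..(a+1), iteratedDerivWithin (i+1) f (Ici 1) t * Qker δ (i+1) (t-a) := by
  have hv : ∀ x ∈ Set.uIcc a (a+1), HasDerivAt (fun t => Qker δ (i+1) (t-a))
      (Qker δ i (x-a)) x := by
    intro x _
    have h := (Qker_hasDerivAt δ i (x-a)).comp x ((hasDerivAt_id x).sub_const a)
    simpa [Function.comp_def] using h
  have hu : ∀ x ∈ Set.uIcc a (a+1), HasDerivAt (iteratedDerivWithin i f (Ici 1))
      (iteratedDerivWithin (i+1) f (Ici 1) x) x := by
    intro x hx
    rw [Set.uIcc_of_le (by linarith : a ≤ a+1)] at hx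
    exact F_hasDerivAt hf hi (by linarith [hx.1])
  have hu' : IntervalIntegrable (iteratedDerivWithin (i+1) f (Ici 1)) volume a (a+1) :=
    F_intervalIntegrable hf (by omega) (by linarith) (by linarith)
  have hv' : IntervalIntegrable (fun t => Qker δ i (t-a)) volume a (a+1) :=
    ((Qker_continuous δ i).comp (continuous_id.sub continuous_const)).intervalIntegrable _ _
  have := intervalIntegral.integral_mul_deriv_eq_deriv_mul hu hv hu' hv'
  rw [this]
  simp only [add_sub_cancel_left, sub_self]
  ring

lemma IBP_unroll (hf : ContDiffOn ℝ r f (Ici 1)) (δ : ℕ → ℝ) {a : ℝ} (ha : 2 ≤ a) :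
    ∀ d, d ≤ r →
    ∫ t in a..(a+1), f t
    = (∑ i ∈ Finset.range d, (-1:ℝ)^i *
        (Qker δ (i+1) 1 * iteratedDerivWithin i f (Ici 1) (a+1)
          - Qker δ (i+1) 0 * iteratedDerivWithin i f (Ici 1) a))
      + (-1:ℝ)^d * ∫ t in a..(a+1), iteratedDerivWithin d f (Ici 1) t * Qker δ d (t-a) := by
  intro d
  induction d with
  | zero =>
    intro _
    simp only [Finset.range_zero, Finset.sum_empty, pow_zero, one_mul, zero_add]
    apply intervalIntegral.integral_congr
    intro t _
    simp [Qker]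
  | succ d ih =>
    intro hd
    rw [ih (by omega), IBP_step hf δ (by omega : d < r) ha, Finset.sum_range_succ]
    ring

lemma integral_sum_intervals (hf : ContDiffOn ℝ r f (Ici 1)) :
    ∀ n : ℕ, 2 ≤ n → ∫ t in (2:ℝ)..(n:ℝ), f t
      = ∑ j ∈ Finset.Icc 2 (n-1), ∫ t in (j:ℝ)..((j:ℝ)+1), f t := by
  have hfi : ∀ a b : ℝ, 1 ≤ a → a ≤ b → IntervalIntegrable f volume a b := by
    intro a b ha hab
    apply ContinuousOn.intervalIntegrable
    apply hf.continuousOn.mono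
    rw [Set.uIcc_of_le hab]
    exact fun t ht => le_trans ha ht.1
  intro n hn
  induction n, hn using Nat.le_induction with
  | base => norm_num
  | succ n hn ih =>
    have hcast : ((n:ℝ)) ≤ ((n+1:ℕ):ℝ) := by push_cast; linarith
    have h2n : (2:ℝ) ≤ (n:ℝ) := by exact_mod_cast hn
    have hadd := intervalIntegral.integral_add_adjacent_intervals
      (a := (2:ℝ)) (b := (n:ℝ)) (c := ((n:ℝ)+1)) (f := f) (μ := volume)
      (hfi 2 n (by norm_num) h2n) (hfi n ((n:ℝ)+1) (by linarith) (by linarith))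
    have hsum := Finset.sum_Icc_succ_top (show 2 ≤ (n-1)+1 by omega)
      (fun j : ℕ => ∫ t in (j:ℝ)..((j:ℝ)+1), f t)
    rw [show (n-1)+1 = n by omega] at hsum
    rw [show (n+1)-1 = n by omega, hsum, ← ih]
    push_cast
    exact hadd.symm
end IBP

section SumAlgebra

variable {f : ℝ → ℝ} {r : ℕ}

lemma sum_shift_a (g : ℕ → ℝ) : ∀ n : ℕ, 2 ≤ n →
    ∑ j ∈ Finset.Icc 2 (n-1), g (j+1) = (∑ j ∈ Finset.Icc 2 n, g j) - g 2 := by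
  intro n hn
  induction n, hn using Nat.le_induction with
  | base => simp
  | succ n hn ih =>
    have h1 := Finset.sum_Icc_succ_top (show 2 ≤ (n-1)+1 by omega) (fun j => g (j+1))
    rw [show (n-1)+1 = n by omega] at h1
    have h2 := Finset.sum_Icc_succ_top (show 2 ≤ n+1 by omega) g
    rw [show (n+1)-1 = n by omega, h1, ih, h2]
    ring_nf

lemma sum_shift_b (g : ℕ → ℝ) : ∀ n : ℕ, 2 ≤ n →
    ∑ j ∈ Finset.Icc 2 (n-1), g j = (∑ j ∈ Finset.Icc 2 n, g j) - g n := by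
  intro n hn
  have h := Finset.sum_Icc_succ_top (show 2 ≤ (n-1)+1 by omega) g
  rw [show (n-1)+1 = n by omega] at h
  rw [h]
  ring

lemma key_identity (hf : ContDiffOn ℝ r f (Ici 1)) (δ : ℕ → ℝ) {n : ℕ} (hn : 2 ≤ n) :
    ∫ t in (2:ℝ)..(n:ℝ), f t
    = (∑ i ∈ Finset.range r, (-1:ℝ)^i *
        ((Qker δ (i+1) 1 - Qker δ (i+1) 0) * (∑ j ∈ Finset.Icc 2 n, iteratedDerivWithin i f (Ici 1) j)
          + Qker δ (i+1) 0 * iteratedDerivWithin i f (Ici 1) n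
          - Qker δ (i+1) 1 * iteratedDerivWithin i f (Ici 1) 2))
      + (-1:ℝ)^r * ∑ j ∈ Finset.Icc 2 (n-1),
          ∫ t in (j:ℝ)..((j:ℝ)+1), iteratedDerivWithin r f (Ici 1) t * Qker δ r (t-(j:ℝ)) := by
  rw [integral_sum_intervals hf n hn]
  have hstep : ∀ j ∈ Finset.Icc 2 (n-1),
      ∫ t in (j:ℝ)..((j:ℝ)+1), f t
      = (∑ i ∈ Finset.range r, (-1:ℝ)^i *
          (Qker δ (i+1) 1 * iteratedDerivWithin i f (Ici 1) ((j:ℝ)+1)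
            - Qker δ (i+1) 0 * iteratedDerivWithin i f (Ici 1) (j:ℝ)))
        + (-1:ℝ)^r * ∫ t in (j:ℝ)..((j:ℝ)+1),
            iteratedDerivWithin r f (Ici 1) t * Qker δ r (t-(j:ℝ)) := by
    intro j hj
    have hj2 : 2 ≤ j := (Finset.mem_Icc.mp hj).1
    exact IBP_unroll hf δ (by exact_mod_cast hj2) r le_rfl
  rw [Finset.sum_congr rfl hstep, Finset.sum_add_distrib, ← Finset.mul_sum]
  congr 1
  rw [Finset.sum_comm]
  apply Finset.sum_congr rfl
  intro i _
  rw [← Finset.mul_sum]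
  congr 1
  have hcast : ∀ j : ℕ, iteratedDerivWithin i f (Ici 1) ((j:ℝ)+1)
      = iteratedDerivWithin i f (Ici 1) ((j+1 : ℕ):ℝ) := by
    intro j; push_cast; ring_nf
  calc ∑ j ∈ Finset.Icc 2 (n-1),
        (Qker δ (i+1) 1 * iteratedDerivWithin i f (Ici 1) ((j:ℝ)+1)
          - Qker δ (i+1) 0 * iteratedDerivWithin i f (Ici 1) (j:ℝ))
      = Qker δ (i+1) 1 * (∑ j ∈ Finset.Icc 2 (n-1), iteratedDerivWithin i f (Ici 1) ((j+1:ℕ):ℝ))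
        - Qker δ (i+1) 0 * (∑ j ∈ Finset.Icc 2 (n-1), iteratedDerivWithin i f (Ici 1) (j:ℝ)) := by
        rw [Finset.sum_sub_distrib, ← Finset.mul_sum, ← Finset.mul_sum]
        congr 2
        apply Finset.sum_congr rfl
        intro j _
        rw [hcast j]
    _ = _ := by
        rw [sum_shift_a (fun j => iteratedDerivWithin i f (Ici 1) (j:ℝ)) n hn,
          sum_shift_b (fun j => iteratedDerivWithin i f (Ici 1) (j:ℝ)) n hn]
        push_cast
        ring

end SumAlgebra

section Convergences

variable {f : ℝ → ℝ} {r : ℕ}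

lemma abs_F_intervalIntegrable (hf : ContDiffOn ℝ r f (Ici 1)) {a b : ℝ}
    (ha : 1 ≤ a) (hab : a ≤ b) :
    IntervalIntegrable (fun t => |iteratedDerivWithin r f (Ici 1) t|) volume a b := by
  apply ContinuousOn.intervalIntegrable
  apply ((F_continuousOn hf le_rfl).abs).mono
  rw [Set.uIcc_of_le hab]
  exact fun t ht => le_trans ha ht.1

lemma rem_tendsto (hf : ContDiffOn ℝ r f (Ici 1))
    (hint : IntegrableOn (fun t => |iteratedDerivWithin r f (Ici 1) t|) (Ici (1:ℝ)))
    (δ : ℕ → ℝ) :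
    ∃ Rinf : ℝ, Tendsto (fun n : ℕ => ∑ j ∈ Finset.Icc 2 (n-1),
      ∫ t in (j:ℝ)..((j:ℝ)+1), iteratedDerivWithin r f (Ici 1) t * Qker δ r (t-(j:ℝ)))
      atTop (nhds Rinf) := by
  obtain ⟨M, hM⟩ := isCompact_Icc.exists_bound_of_continuousOn
    ((Qker_continuous δ r).continuousOn (s := Icc (0:ℝ) 1))
  have hM0 : 0 ≤ M := le_trans (norm_nonneg _) (hM 0 (by norm_num))
  set g : ℕ → ℝ := fun j => ∫ t in (j:ℝ)..((j:ℝ)+1),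
    iteratedDerivWithin r f (Ici 1) t * Qker δ r (t-(j:ℝ)) with hg
  set w : ℕ → ℝ := fun i => ∫ t in ((i:ℝ)+2)..((i:ℝ)+3), |iteratedDerivWithin r f (Ici 1) t|
    with hw
  have hw0 : ∀ i, 0 ≤ w i := fun i =>
    intervalIntegral.integral_nonneg (by linarith) (fun t _ => abs_nonneg _)
  have hwps : ∀ n : ℕ, ∑ i ∈ Finset.range n, w i
      = ∫ t in (2:ℝ)..((n:ℝ)+2), |iteratedDerivWithin r f (Ici 1) t| := by
    intro n
    induction n with
    | zero => norm_num
    | succ n ih =>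
      rw [Finset.sum_range_succ, ih]
      have := intervalIntegral.integral_add_adjacent_intervals
        (a := (2:ℝ)) (b := (n:ℝ)+2) (c := (n:ℝ)+3)
        (f := fun t => |iteratedDerivWithin r f (Ici 1) t|) (μ := volume)
        (abs_F_intervalIntegrable hf (by norm_num) (by push_cast; linarith [Nat.cast_nonneg (α := ℝ) n]))
        (abs_F_intervalIntegrable hf (by linarith [Nat.cast_nonneg (α := ℝ) n]) (by linarith))
      rw [this]
      push_cast
      ring_nf
  have hwle : ∀ n : ℕ, ∑ i ∈ Finset.range n, w i
      ≤ ∫ t in Ici (1:ℝ), |iteratedDerivWithin r f (Ici 1) t| := by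
    intro n
    rw [hwps n, intervalIntegral.integral_of_le (by linarith [Nat.cast_nonneg (α := ℝ) n])]
    apply MeasureTheory.setIntegral_mono_set hint
    · exact Filter.Eventually.of_forall (fun t => abs_nonneg _)
    · apply Filter.Eventually.of_forall
      intro t ht
      exact le_trans one_le_two ht.1.le
  have hwsum : Summable w := summable_of_sum_range_le hw0 hwle
  have hgb : ∀ i : ℕ, |g (i+2)| ≤ M * w i := by
    intro i
    have hcast : ((i+2:ℕ):ℝ) = (i:ℝ)+2 := by push_cast; ring
    have h1 : |g (i+2)| ≤ ∫ t in ((i:ℝ)+2)..((i:ℝ)+3),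
        |iteratedDerivWithin r f (Ici 1) t * Qker δ r (t-((i:ℝ)+2))| := by
      rw [hg]
      simp only [hcast]
      rw [show (i:ℝ)+2+1 = (i:ℝ)+3 by ring]
      exact intervalIntegral.abs_integral_le_integral_abs (by linarith)
    have h2 : ∫ t in ((i:ℝ)+2)..((i:ℝ)+3),
        |iteratedDerivWithin r f (Ici 1) t * Qker δ r (t-((i:ℝ)+2))|
        ≤ ∫ t in ((i:ℝ)+2)..((i:ℝ)+3), M * |iteratedDerivWithin r f (Ici 1) t| := by
      apply intervalIntegral.integral_mono_on (by linarith)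
      · apply ContinuousOn.intervalIntegrable
        apply ContinuousOn.abs
        apply ContinuousOn.mul
        · apply (F_continuousOn hf le_rfl).mono
          rw [Set.uIcc_of_le (by linarith : (i:ℝ)+2 ≤ (i:ℝ)+3)]
          intro t ht
          have := ht.1
          have hi : (0:ℝ) ≤ i := Nat.cast_nonneg i
          exact le_trans (by linarith) this
        · exact ((Qker_continuous δ r).comp (continuous_id.sub continuous_const)).continuousOn
      · exact ((abs_F_intervalIntegrable hf (by linarith [Nat.cast_nonneg (α := ℝ) i]) (by linarith)).const_mul M)
      · intro t ht
        rw [abs_mul, mul_comm]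
        apply mul_le_mul_of_nonneg_right _ (abs_nonneg _)
        have hQ := hM (t - ((i:ℝ)+2)) ⟨by linarith [ht.1], by linarith [ht.2]⟩
        rwa [Real.norm_eq_abs] at hQ
    have h3 : ∫ t in ((i:ℝ)+2)..((i:ℝ)+3), M * |iteratedDerivWithin r f (Ici 1) t| = M * w i := by
      rw [hw, intervalIntegral.integral_const_mul]
    linarith
  have hsummable : Summable (fun i => g (i+2)) := by
    apply Summable.of_abs
    apply Summable.of_nonneg_of_le (fun i => abs_nonneg _) hgb (hwsum.mul_left M)
  obtain ⟨Ra, hRa⟩ := hsummable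
  refine ⟨Ra, ?_⟩
  have hIcc : ∀ n : ℕ, ∑ j ∈ Finset.Icc 2 (n-1), g j
      = ∑ i ∈ Finset.range (n-2), g (i+2) := by
    intro n
    have : Finset.Icc 2 (n-1) = Finset.Ico 2 n := by
      ext j
      simp only [Finset.mem_Icc, Finset.mem_Ico]
      omega
    rw [this, Finset.sum_Ico_eq_sum_range]
    apply Finset.sum_congr rfl
    intro i _
    congr 1
    omega
  have hps := hRa.tendsto_sum_nat
  have := hps.comp (tendsto_sub_atTop_nat 2)
  apply this.congr
  intro n
  exact (hIcc n).symm

end Convergences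

section Tails

variable {f : ℝ → ℝ} {r : ℕ}

lemma Fr_integrableOn (hf : ContDiffOn ℝ r f (Ici 1))
    (hint : IntegrableOn (fun t => |iteratedDerivWithin r f (Ici 1) t|) (Ici (1:ℝ))) :
    IntegrableOn (iteratedDerivWithin r f (Ici 1)) (Ioi (2:ℝ)) := by
  have h1 : IntegrableOn (fun t => |iteratedDerivWithin r f (Ici 1) t|) (Ioi (2:ℝ)) :=
    hint.mono_set (fun t ht => show (1:ℝ) ≤ t from le_trans one_le_two (le_of_lt (show (2:ℝ) < t from ht)))
  exact MeasureTheory.Integrable.mono'  h1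
    (((F_continuousOn hf le_rfl).mono
      (fun t ht => show (1:ℝ) ≤ t from le_trans one_le_two (le_of_lt (show (2:ℝ) < t from ht)))).aestronglyMeasurable measurableSet_Ioi)
    (Filter.Eventually.of_forall (fun x => le_of_eq (Real.norm_eq_abs _)))

lemma fn_tendsto_zero {S : ℝ}
    (hS : Tendsto (fun q : ℕ => ∑ j ∈ Finset.Icc 1 q, f j) atTop (nhds S)) :
    Tendsto (fun n : ℕ => f n) atTop (nhds 0) := by
  have h1 : Tendsto (fun q : ℕ => (∑ j ∈ Finset.Icc 1 (q+1), f j)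
      - ∑ j ∈ Finset.Icc 1 q, f j) atTop (nhds 0) := by
    have := (hS.comp (tendsto_add_atTop_nat 1)).sub hS
    simpa using this
  have h2 : ∀ q : ℕ, (∑ j ∈ Finset.Icc 1 (q+1), f j) - (∑ j ∈ Finset.Icc 1 q, f j)
      = f ((q+1 : ℕ) : ℝ) := by
    intro q
    rw [Finset.sum_Icc_succ_top (by omega : 1 ≤ q+1)]
    ring
  have h3 : Tendsto (fun q : ℕ => f ((q+1:ℕ):ℝ)) atTop (nhds 0) := by
    apply h1.congr
    intro q
    exact h2 q
  exact (tendsto_add_atTop_iff_nat 1).mp h3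

lemma f_tendsto_zero_real (hf : ContDiffOn ℝ r f (Ici 1)) (hr : 1 ≤ r)
    (hint : IntegrableOn (fun t => |iteratedDerivWithin r f (Ici 1) t|) (Ici (1:ℝ)))
    (hfn : Tendsto (fun n : ℕ => f n) atTop (nhds 0)) :
    Tendsto f atTop (nhds 0) := by
  rcases eq_or_lt_of_le hr with h1 | h2
  · -- r = 1
    subst h1
    have hInt := Fr_integrableOn hf hint
    have hT := MeasureTheory.intervalIntegral_tendsto_integral_Ioi 2 hInt tendsto_id
    set T := ∫ t in Ioi (2:ℝ), iteratedDerivWithin 1 f (Ici 1) t with hTdef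
    have hreal : Tendsto f atTop (nhds (T + f 2)) := by
      apply Tendsto.congr' _ (hT.add_const (f 2))
      filter_upwards [Filter.eventually_ge_atTop (2:ℝ)] with x hx
      have hFTC := F_FTC hf (by omega : 0 < 1) (by norm_num : (1:ℝ) < 2) hx
      rw [iteratedDerivWithin_zero] at hFTC
      simp only [id]
      rw [hFTC]
      ring
    have hnat : Tendsto (fun n : ℕ => f n) atTop (nhds (T + f 2)) :=
      hreal.comp tendsto_natCast_atTop_atTop
    have : T + f 2 = 0 := tendsto_nhds_unique hnat hfn
    rwa [this] at hreal
  · -- 2 ≤ r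
    have hF1 : Tendsto (fun x : ℝ => iteratedDerivWithin 1 f (Ici 1) x) atTop (nhds 0) :=
      F_tendsto_zero hf hint hfn 1 le_rfl (by omega)
    rw [Metric.tendsto_atTop] at hF1 hfn ⊢
    intro ε hε
    obtain ⟨N₁, hN₁⟩ := hF1 (ε/2) (by linarith)
    obtain ⟨N₂, hN₂⟩ := hfn (ε/2) (by linarith)
    refine ⟨max (N₁+2) ((N₂:ℝ)+2), fun x hx => ?_⟩
    have hx1 : N₁ + 2 ≤ x := le_trans (le_max_left _ _) hx
    have hx2 : (N₂:ℝ) + 2 ≤ x := le_trans (le_max_right _ _) hx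
    have hN₂0 : (0:ℝ) ≤ (N₂:ℝ) := Nat.cast_nonneg _
    set n : ℕ := ⌊x⌋₊ with hn
    have hnx : (n:ℝ) ≤ x := Nat.floor_le (by linarith)
    have hxn : x < (n:ℝ) + 1 := Nat.lt_floor_add_one x
    have hnN₂ : N₂ ≤ n := by
      have : (N₂:ℝ) ≤ (n:ℝ) := by linarith
      exact_mod_cast this
    have hn1 : (1:ℝ) < (n:ℝ) := by linarith
    have hFTC := F_FTC hf (by omega : 0 < r) hn1 hnx
    rw [iteratedDerivWithin_zero] at hFTC
    have hb : ∀ t ∈ Set.uIoc (n:ℝ) x, ‖iteratedDerivWithin (0+1) f (Ici 1) t‖ ≤ ε/2 := by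
      intro t htm
      rw [Set.uIoc_of_le hnx] at htm
      have ht' := hN₁ t (by linarith [htm.1])
      rw [Real.dist_eq, sub_zero] at ht'
      rw [Real.norm_eq_abs]
      exact ht'.le
    have hIb := intervalIntegral.norm_integral_le_of_norm_le_const hb
    rw [Real.norm_eq_abs, hFTC] at hIb
    have hfn' := hN₂ n hnN₂
    rw [Real.dist_eq, sub_zero] at hfn'
    rw [Real.dist_eq, sub_zero]
    have habs : |x - (n:ℝ)| ≤ 1 := by
      rw [abs_of_nonneg (by linarith)]; linarith
    have h4 : |f x - f (n:ℝ)| ≤ ε/2 := by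
      calc |f x - f (n:ℝ)| ≤ ε/2 * |x - (n:ℝ)| := hIb
        _ ≤ ε/2 * 1 := by
            apply mul_le_mul_of_nonneg_left habs (by linarith)
        _ = ε/2 := by ring
    calc |f x| = |f (n:ℝ) + (f x - f (n:ℝ))| := by ring_nf
      _ ≤ |f (n:ℝ)| + |f x - f (n:ℝ)| := abs_add_le _ _
      _ < ε := by linarith
  
end Tails

section Final

variable {f : ℝ → ℝ} {r : ℕ}

lemma integral_real_tendsto (hf : ContDiffOn ℝ r f (Ici 1)) {A : ℝ}
    (hA : Tendsto (fun n : ℕ => ∫ t in (2:ℝ)..(n:ℝ), f t) atTop (nhds A))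
    (hf0 : Tendsto f atTop (nhds 0)) :
    Tendsto (fun b : ℝ => ∫ t in (1:ℝ)..b, f t) atTop
      (nhds ((∫ t in (1:ℝ)..(2:ℝ), f t) + A)) := by
  have hfi : ∀ a b : ℝ, 1 ≤ a → a ≤ b → IntervalIntegrable f volume a b := by
    intro a b ha hab
    apply ContinuousOn.intervalIntegrable
    apply hf.continuousOn.mono
    rw [Set.uIcc_of_le hab]
    exact fun t ht => le_trans ha ht.1
  rw [Metric.tendsto_atTop] at hA hf0 ⊢
  intro ε hε
  obtain ⟨N₁, hN₁⟩ := hA (ε/2) (by linarith)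
  obtain ⟨N₂, hN₂⟩ := hf0 (ε/2) (by linarith)
  refine ⟨max ((N₁:ℝ)+2) (max (N₂+2) 3), fun b hb => ?_⟩
  have hb1 : (N₁:ℝ)+2 ≤ b := le_trans (le_max_left _ _) hb
  have hb2 : N₂+2 ≤ b := le_trans ((le_max_left _ _).trans (le_max_right _ _)) hb
  have hb3 : (3:ℝ) ≤ b := le_trans ((le_max_right _ _).trans (le_max_right _ _)) hb
  have hN₁0 : (0:ℝ) ≤ (N₁:ℝ) := Nat.cast_nonneg _
  set n : ℕ := ⌊b⌋₊ with hn
  have hnb : (n:ℝ) ≤ b := Nat.floor_le (by linarith)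
  have hbn : b < (n:ℝ) + 1 := Nat.lt_floor_add_one b
  have hnN₁ : N₁ ≤ n := by
    have : (N₁:ℝ) ≤ (n:ℝ) := by linarith
    exact_mod_cast this
  have hn2 : (2:ℝ) ≤ (n:ℝ) := by linarith
  have hd1 := intervalIntegral.integral_add_adjacent_intervals
    (a := (1:ℝ)) (b := (2:ℝ)) (c := (n:ℝ)) (f := f) (μ := volume)
    (hfi 1 2 le_rfl one_le_two) (hfi 2 n one_le_two hn2)
  have hd2 := intervalIntegral.integral_add_adjacent_intervals
    (a := (1:ℝ)) (b := (n:ℝ)) (c := b) (f := f) (μ := volume)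
    (hfi 1 n le_rfl (by linarith)) (hfi n b (by linarith) hnb)
  have htail : |∫ t in (n:ℝ)..b, f t| ≤ ε/2 := by
    have hc : ∀ t ∈ Set.uIoc (n:ℝ) b, ‖f t‖ ≤ ε/2 := by
      intro t htm
      rw [Set.uIoc_of_le hnb] at htm
      have := hN₂ t (by linarith [htm.1])
      rw [Real.dist_eq, sub_zero] at this
      rw [Real.norm_eq_abs]
      exact this.le
    have := intervalIntegral.norm_integral_le_of_norm_le_const hc
    rw [Real.norm_eq_abs] at this
    calc |∫ t in (n:ℝ)..b, f t| ≤ ε/2 * |b - (n:ℝ)| := this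
      _ ≤ ε/2 * 1 := mul_le_mul_of_nonneg_left
          (by rw [abs_of_nonneg (by linarith)]; linarith) (by linarith)
      _ = ε/2 := by ring
  have hmid := hN₁ n hnN₁
  rw [Real.dist_eq] at hmid
  rw [Real.dist_eq]
  have hdecomp : ∫ t in (1:ℝ)..b, f t
      = (∫ t in (1:ℝ)..(2:ℝ), f t) + (∫ t in (2:ℝ)..(n:ℝ), f t) + ∫ t in (n:ℝ)..b, f t := by
    rw [hd1, hd2]
  rw [hdecomp]
  have : (∫ t in (1:ℝ)..(2:ℝ), f t) + (∫ t in (2:ℝ)..(n:ℝ), f t) + (∫ t in (n:ℝ)..b, f t)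
      - ((∫ t in (1:ℝ)..(2:ℝ), f t) + A)
      = ((∫ t in (2:ℝ)..(n:ℝ), f t) - A) + ∫ t in (n:ℝ)..b, f t := by ring
  rw [this]
  calc |((∫ t in (2:ℝ)..(n:ℝ), f t) - A) + ∫ t in (n:ℝ)..b, f t|
      ≤ |(∫ t in (2:ℝ)..(n:ℝ), f t) - A| + |∫ t in (n:ℝ)..b, f t| := abs_add_le _ _
    _ < ε := by linarith

lemma rho_match (hr : 1 ≤ r) (m : ℕ) (B : ℕ → ℝ → ℝ) (n : ℕ) :
    ∑ i ∈ Finset.range r, (-1:ℝ)^i *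
      ((Qker (fun k => (B k 1 - B k 0)/((m ! : ℝ) * (k ! : ℝ))) (i+1) 1
        - Qker (fun k => (B k 1 - B k 0)/((m ! : ℝ) * (k ! : ℝ))) (i+1) 0)
        * (∑ j ∈ Finset.Icc 2 n, iteratedDerivWithin i f (Ici 1) j))
    = (∑ j ∈ Finset.Icc 2 n, f j)
      + (1 / (m ! : ℝ)) * ∑ j ∈ Finset.Icc 2 n, ∑ k ∈ Finset.Icc 2 r,
          ((-1:ℝ)^(k+1) / (k ! : ℝ)) * (B k 1 - B k 0)
            * iteratedDerivWithin (k-1) f (Ici 1) j := by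
  set δB : ℕ → ℝ := fun k => (B k 1 - B k 0)/((m ! : ℝ) * (k ! : ℝ)) with hδB
  obtain ⟨r', rfl⟩ : ∃ r', r = r'+1 := ⟨r-1, by omega⟩
  rw [Finset.sum_range_succ']
  have h0 : (-1:ℝ)^0 * ((Qker δB (0+1) 1 - Qker δB (0+1) 0)
      * (∑ j ∈ Finset.Icc 2 n, iteratedDerivWithin 0 f (Ici 1) j))
      = ∑ j ∈ Finset.Icc 2 n, f j := by
    rw [Qker_one_diff]
    simp [iteratedDerivWithin_zero]
  rw [h0, add_comm]
  congr 1
  rw [Finset.sum_comm, Finset.mul_sum]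
  have hIcc : Finset.Icc 2 (r'+1) = Finset.Ico 2 (r'+2) := by
    ext k
    simp only [Finset.mem_Icc, Finset.mem_Ico]
    omega
  rw [hIcc, Finset.sum_Ico_eq_sum_range, show r'+2-2 = r' from by omega]
  apply Finset.sum_congr rfl
  intro i _
  have hQd : Qker δB (i+1+1) 1 - Qker δB (i+1+1) 0 = δB (i+2) := by
    rw [show i+1+1 = i+2 from rfl]
    exact Qker_diff δB (i+2) (by omega)
  rw [hQd]
  have hk1 : 2+i-1 = i+1 := by omega
  have hsign : (-1:ℝ)^(2+i+1) = (-1:ℝ)^(i+1) := by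
    rw [show 2+i+1 = (i+1)+2 from by omega, pow_add]
    norm_num
  have hfac : ((m ! : ℝ) ≠ 0) := Nat.cast_ne_zero.mpr (Nat.factorial_ne_zero m)
  have hfac2 : (((2+i) ! : ℝ) ≠ 0) := Nat.cast_ne_zero.mpr (Nat.factorial_ne_zero _)
  have hsum : ∑ j ∈ Finset.Icc 2 n, ((-1:ℝ)^(2+i+1) / ((2+i) ! : ℝ)) * (B (2+i) 1 - B (2+i) 0)
        * iteratedDerivWithin (2+i-1) f (Ici 1) j
      = ((-1:ℝ)^(i+1) / ((2+i) ! : ℝ)) * (B (2+i) 1 - B (2+i) 0)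
        * ∑ j ∈ Finset.Icc 2 n, iteratedDerivWithin (i+1) f (Ici 1) j := by
    rw [Finset.mul_sum]
    apply Finset.sum_congr rfl
    intro j _
    rw [hk1, hsign]
  rw [hsum]
  simp only [hδB]
  have hi2 : (2+i) = (i+2) := by omega
  rw [hi2]
  field_simp
end Final

end Stmt19

open Stmt19 Filter Set MeasureTheory in
theorem stmt_19 (m : ℕ) (hm : 0 < m) (B : ℕ → ℝ → ℝ) (hB : IsGenBernoulli m B)
    (r : ℕ) (hr : 1 ≤ r) (f : ℝ → ℝ) (hf : ContDiffOn ℝ r f (Set.Ici 1))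
    (hρ : ∃ L : ℝ, Filter.Tendsto
      (fun q : ℕ => (1 / (m ! : ℝ)) *
        ∑ j ∈ Finset.Icc 2 (q - 1), ∑ k ∈ Finset.Icc 2 r,
          ((-1 : ℝ) ^ (k + 1) / (k ! : ℝ)) * (B k 1 - B k 0) *
            iteratedDerivWithin (k - 1) f (Set.Ici 1) j)
      Filter.atTop (nhds L))
    (hint : MeasureTheory.IntegrableOn
      (fun t => |iteratedDerivWithin r f (Set.Ici 1) t|) (Set.Ici (1 : ℝ)))
    (hlim : ∃ L : ℝ, Filter.Tendsto (fun n : ℕ => f n) Filter.atTop (nhds L)) :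
    (∃ I : ℝ, Filter.Tendsto (fun b : ℝ => ∫ t in (1 : ℝ)..b, f t)
        Filter.atTop (nhds I)) ↔
    (∃ S : ℝ, Filter.Tendsto (fun q : ℕ => ∑ j ∈ Finset.Icc 1 q, f j)
        Filter.atTop (nhds S)) := by
  obtain ⟨L, hL⟩ := hlim
  obtain ⟨Lρ, hLρ⟩ := hρ
  set δB : ℕ → ℝ := fun k => (B k 1 - B k 0) / ((m ! : ℝ) * (k ! : ℝ)) with hδB
  set Sf : ℕ → ℝ := fun n => ∑ j ∈ Finset.Icc 2 n, f j with hSf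
  set It : ℕ → ℝ := fun n => ∫ t in (2:ℝ)..(n:ℝ), f t with hIt
  set ρs : ℕ → ℝ := fun n => (1 / (m ! : ℝ)) *
    ∑ j ∈ Finset.Icc 2 n, ∑ k ∈ Finset.Icc 2 r,
      ((-1 : ℝ) ^ (k + 1) / (k ! : ℝ)) * (B k 1 - B k 0) *
        iteratedDerivWithin (k - 1) f (Set.Ici 1) j with hρsdef
  set G : ℕ → ℝ := fun n => ∑ i ∈ Finset.range r, (-1:ℝ)^i *
    (Qker δB (i+1) 0 * iteratedDerivWithin i f (Set.Ici 1) n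
      - Qker δB (i+1) 1 * iteratedDerivWithin i f (Set.Ici 1) 2) with hGdef
  set R : ℕ → ℝ := fun n => ∑ j ∈ Finset.Icc 2 (n-1),
    ∫ t in (j:ℝ)..((j:ℝ)+1), iteratedDerivWithin r f (Set.Ici 1) t * Qker δB r (t-(j:ℝ))
    with hRdef
  -- the key identity
  have hid : ∀ n : ℕ, 2 ≤ n → It n = Sf n + ρs n + G n + (-1:ℝ)^r * R n := by
    intro n hn
    have hKI := key_identity hf δB hn
    have hsplit : ∑ i ∈ Finset.range r, (-1:ℝ)^i *
        ((Qker δB (i+1) 1 - Qker δB (i+1) 0) *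
            (∑ j ∈ Finset.Icc 2 n, iteratedDerivWithin i f (Set.Ici 1) j)
          + Qker δB (i+1) 0 * iteratedDerivWithin i f (Set.Ici 1) n
          - Qker δB (i+1) 1 * iteratedDerivWithin i f (Set.Ici 1) 2)
        = (∑ i ∈ Finset.range r, (-1:ℝ)^i * ((Qker δB (i+1) 1 - Qker δB (i+1) 0) *
            (∑ j ∈ Finset.Icc 2 n, iteratedDerivWithin i f (Set.Ici 1) j)))
          + ∑ i ∈ Finset.range r, (-1:ℝ)^i *
              (Qker δB (i+1) 0 * iteratedDerivWithin i f (Set.Ici 1) n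
                - Qker δB (i+1) 1 * iteratedDerivWithin i f (Set.Ici 1) 2) := by
      rw [← Finset.sum_add_distrib]
      apply Finset.sum_congr rfl
      intro i _
      ring
    have hmatch := rho_match (f := f) hr m B n
    rw [← hδB] at hmatch
    simp only [hIt, hSf, hρsdef, hGdef, hRdef]
    rw [hKI, hsplit, hmatch]
  -- convergence of the correction terms
  have hρs_t : Tendsto ρs atTop (nhds Lρ) := by
    have h1 := hLρ.comp (tendsto_add_atTop_nat 1)
    apply h1.congr
    intro n
    simp only [Function.comp, hρsdef]
    norm_num
  have hR_t : ∃ Rinf, Tendsto R atTop (nhds Rinf) := rem_tendsto hf hint δB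
  obtain ⟨Rinf, hR_t⟩ := hR_t
  have hG_t : ∃ Gf, Tendsto G atTop (nhds Gf) := by
    refine ⟨∑ i ∈ Finset.range r, (-1:ℝ)^i *
      (Qker δB (i+1) 0 * (if i = 0 then L else 0)
        - Qker δB (i+1) 1 * iteratedDerivWithin i f (Set.Ici 1) 2), ?_⟩
    apply tendsto_finset_sum
    intro i hi
    rcases Nat.eq_zero_or_pos i with h0 | hpos
    · subst h0
      rw [if_pos rfl]
      have base : Tendsto (fun n : ℕ => iteratedDerivWithin 0 f (Set.Ici 1) n)
          atTop (nhds L) := by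
        simpa [iteratedDerivWithin_zero] using hL
      exact ((base.const_mul _).sub_const _).const_mul _
    · rw [if_neg (by omega)]
      have hir : i < r := Finset.mem_range.mp hi
      have base : Tendsto (fun n : ℕ => iteratedDerivWithin i f (Set.Ici 1) n)
          atTop (nhds 0) :=
        (F_tendsto_zero hf hint hL i hpos hir).comp tendsto_natCast_atTop_atTop
      exact ((base.const_mul _).sub_const _).const_mul _
  obtain ⟨Gf, hG_t⟩ := hG_t
  have hΨ : Tendsto (fun n => ρs n + G n + (-1:ℝ)^r * R n) atTop
      (nhds (Lρ + Gf + (-1:ℝ)^r * Rinf)) :=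
    (hρs_t.add hG_t).add (hR_t.const_mul _)
  -- ℕ-level equivalence
  have hiff1 : (∃ A, Tendsto It atTop (nhds A)) ↔ (∃ S, Tendsto Sf atTop (nhds S)) := by
    constructor
    · rintro ⟨A, hA⟩
      refine ⟨A - (Lρ + Gf + (-1:ℝ)^r * Rinf), ?_⟩
      apply Filter.Tendsto.congr' _ (hA.sub hΨ)
      filter_upwards [Filter.eventually_ge_atTop 2] with n hn
      rw [hid n hn]
      ring
    · rintro ⟨S, hS⟩
      refine ⟨S + (Lρ + Gf + (-1:ℝ)^r * Rinf), ?_⟩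
      apply Filter.Tendsto.congr' _ (hS.add hΨ)
      filter_upwards [Filter.eventually_ge_atTop 2] with n hn
      rw [hid n hn]
      ring
  -- relating the two series forms
  have hicc : ∀ q : ℕ, 1 ≤ q → ∑ j ∈ Finset.Icc 1 q, f j = f 1 + Sf q := by
    intro q hq
    have hins : Finset.Icc 1 q = insert 1 (Finset.Icc 2 q) := by
      ext j
      simp only [Finset.mem_Icc, Finset.mem_insert]
      omega
    rw [hins, Finset.sum_insert (by simp)]
    norm_num [hSf]
  have hfi : ∀ a b : ℝ, 1 ≤ a → a ≤ b → IntervalIntegrable f volume a b := by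
    intro a b ha hab
    apply ContinuousOn.intervalIntegrable
    apply hf.continuousOn.mono
    rw [Set.uIcc_of_le hab]
    exact fun t ht => le_trans ha ht.1
  constructor
  · rintro ⟨I, hI⟩
    have h1 : Tendsto (fun n : ℕ => ∫ t in (1:ℝ)..(n:ℝ), f t) atTop (nhds I) :=
      hI.comp tendsto_natCast_atTop_atTop
    have hIt_t : Tendsto It atTop (nhds (I - ∫ t in (1:ℝ)..(2:ℝ), f t)) := by
      apply Filter.Tendsto.congr' _ (h1.sub_const _)
      filter_upwards [Filter.eventually_ge_atTop 2] with n hn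
      have h2n : (2:ℝ) ≤ (n:ℝ) := by exact_mod_cast hn
      have hadd := intervalIntegral.integral_add_adjacent_intervals
        (a := (1:ℝ)) (b := (2:ℝ)) (c := (n:ℝ)) (f := f) (μ := volume)
        (hfi 1 2 le_rfl one_le_two) (hfi 2 n one_le_two h2n)
      rw [hIt]
      simp only []
      linarith [hadd]
    obtain ⟨S0, hS0⟩ := hiff1.mp ⟨_, hIt_t⟩
    refine ⟨f 1 + S0, ?_⟩
    apply Filter.Tendsto.congr' _ (hS0.const_add (f 1))
    filter_upwards [Filter.eventually_ge_atTop 1] with q hq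
    rw [hicc q hq]
  · rintro ⟨S, hS⟩
    have hSf_t : Tendsto Sf atTop (nhds (S - f 1)) := by
      apply Filter.Tendsto.congr' _ (hS.sub_const (f 1))
      filter_upwards [Filter.eventually_ge_atTop 1] with q hq
      rw [hicc q hq]
      ring
    obtain ⟨A, hA⟩ := hiff1.mpr ⟨_, hSf_t⟩
    have hfn0 : Tendsto (fun n : ℕ => f n) atTop (nhds 0) := fn_tendsto_zero hS
    have hf0 : Tendsto f atTop (nhds 0) := f_tendsto_zero_real hf hr hint hfn0
    exact ⟨_, integral_real_tendsto hf hA hf0⟩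
end
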